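/- arXiv:1003.2508 — 9 statements merged into one kernel-verified Lean document; each statement's English description precedes it below -/
import Mathlib

section
/- Let f : ℝ → ℝ be continuous and even. Then for every nonzero v = (v₁, v₂) ∈ ℝ², the average function satisfies f̄(v) = κ(|v|) · v/|v|, where κ(s) := (2/π) ∫_0^s f(σ) √(1 − σ²/s²) dσ for s > 0. -/
open Real Set Filter MeasureTheory
open scoped RealInnerProductSpace

noncomputable section

/-- The plane `ℝ²` with the Euclidean norm. -/
abbrev E2 : Type := EuclideanSpace ℝ (Fin 2)

/-- The vector `(a, b) ∈ ℝ²`. -/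
def vec2 (a b : ℝ) : E2 := WithLp.toLp 2 ![a, b]

/-- `κ(s) = (2/π) ∫₀ˢ f(σ) √(1 - σ²/s²) dσ` (equal to `0` at `s = 0`). -/
def kappa (f : ℝ → ℝ) (s : ℝ) : ℝ :=
  (2 / π) * ∫ σ in (0:ℝ)..s, f σ * Real.sqrt (1 - σ ^ 2 / s ^ 2)

/-- The average function `f̄` of `f`. -/
def fbar (f : ℝ → ℝ) (v : E2) : E2 :=
  (1 / (2 * π)) • ∫ φ in (0:ℝ)..(2 * π),
    (f (v 0 * Real.cos φ + v 1 * Real.sin φ) * (-(v 0) * Real.sin φ + v 1 * Real.cos φ)) •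
      vec2 (-Real.sin φ) (Real.cos φ)

/-- The average function `γ̄` of a coupling function `γ`. -/
def gbar (γ : ℝ → ℝ) (v : E2) : E2 :=
  (1 / (2 * π)) • ∫ φ in (0:ℝ)..(2 * π),
    γ (-(v 0) * Real.sin φ + v 1 * Real.cos φ) • vec2 (-Real.sin φ) (Real.cos φ)

/-- `ρ̄(s) = (1/2π) ∫₀^{2π} γ(s sin φ) sin φ dφ`. -/
def rhobar (γ : ℝ → ℝ) (s : ℝ) : ℝ :=
  (1 / (2 * π)) * ∫ φ in (0:ℝ)..(2 * π), γ (s * Real.sin φ) * Real.sin φ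

/-- A class-K function: continuous on `[0, ∞)`, zero at zero, strictly increasing on `[0, ∞)`. -/
def ClassK (α : ℝ → ℝ) : Prop :=
  ContinuousOn α (Set.Ici 0) ∧ α 0 = 0 ∧ StrictMonoOn α (Set.Ici 0)

/-- Condition (L2) for a function `F` with crossing point `s₀ > 0`: `F(s₀) = 0`,
`F` negative on `(0, s₀)`, and `F` positive, nondecreasing and unbounded on `(s₀, ∞)`. -/
def CondL2 (F : ℝ → ℝ) (s₀ : ℝ) : Prop :=
  0 < s₀ ∧ F s₀ = 0 ∧ (∀ s ∈ Set.Ioo (0:ℝ) s₀, F s < 0) ∧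
    (∀ s ∈ Set.Ioi s₀, 0 < F s) ∧ MonotoneOn F (Set.Ioi s₀) ∧
    Filter.Tendsto F Filter.atTop Filter.atTop

/-- The state space `(ℝ²)^m` with the Euclidean norm of `ℝ^{2m}`. -/
abbrev St (m : ℕ) : Type := PiLp 2 (fun _ : Fin m => E2)

-- auxiliary lemmas
lemma Jzero (f : ℝ → ℝ) (r : ℝ) :
    (∫ ψ in (0:ℝ)..(2*π), f (r * Real.cos ψ) * (Real.sin ψ * Real.cos ψ)) = 0 := by
  have h := intervalIntegral.integral_comp_sub_left (a := (0:ℝ)) (b := 2*π)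
      (fun ψ => f (r * Real.cos ψ) * (Real.sin ψ * Real.cos ψ)) (2*π)
  simp only [Real.cos_two_pi_sub, Real.sin_two_pi_sub, sub_self, sub_zero] at h
  have h2 : (∫ ψ in (0:ℝ)..(2*π), -(f (r * Real.cos ψ) * (Real.sin ψ * Real.cos ψ)))
      = ∫ ψ in (0:ℝ)..(2*π), f (r * Real.cos ψ) * (Real.sin ψ * Real.cos ψ) := by
    rw [← h]; congr 1; ext ψ; ring
  rw [intervalIntegral.integral_neg] at h2
  linarith

lemma Ival (f : ℝ → ℝ) (hf : Continuous f) (hfe : ∀ s : ℝ, f (-s) = f s) {r : ℝ} (hr : 0 < r) :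
    (∫ ψ in (0:ℝ)..(2*π), f (r * Real.cos ψ) * Real.sin ψ ^ 2)
      = (4/r) * ∫ σ in (0:ℝ)..r, f σ * Real.sqrt (1 - σ ^ 2 / r ^ 2) := by
  set q : ℝ → ℝ := fun ψ => f (r * Real.cos ψ) * Real.sin ψ ^ 2 with hq
  have hqc : Continuous q := by
    exact (hf.comp (continuous_const.mul Real.continuous_cos)).mul
      (Real.continuous_sin.pow 2)
  have h1 : (∫ ψ in π..(2*π), q ψ) = ∫ ψ in (0:ℝ)..π, q ψ := by
    have h := intervalIntegral.integral_comp_sub_left (a := (0:ℝ)) (b := π) q (2*π)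
    have e : (2*π) - π = π := by ring
    rw [e, sub_zero] at h
    rw [← h]; congr 1; ext ψ
    simp only [hq, Real.cos_two_pi_sub, Real.sin_two_pi_sub]; ring
  have h2 : (∫ ψ in (π/2)..π, q ψ) = ∫ ψ in (0:ℝ)..(π/2), q ψ := by
    have h := intervalIntegral.integral_comp_sub_left (a := (0:ℝ)) (b := π/2) q π
    have e : π - π/2 = π/2 := by ring
    rw [e, sub_zero] at h
    rw [← h]; congr 1; ext ψ
    simp only [hq, Real.cos_pi_sub, Real.sin_pi_sub, mul_neg, hfe]
  have hsplit1 : (∫ ψ in (0:ℝ)..(2*π), q ψ)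
      = (∫ ψ in (0:ℝ)..π, q ψ) + ∫ ψ in π..(2*π), q ψ := by
    rw [intervalIntegral.integral_add_adjacent_intervals] <;>
      exact hqc.intervalIntegrable _ _
  have hsplit2 : (∫ ψ in (0:ℝ)..π, q ψ)
      = (∫ ψ in (0:ℝ)..(π/2), q ψ) + ∫ ψ in (π/2)..π, q ψ := by
    rw [intervalIntegral.integral_add_adjacent_intervals] <;>
      exact hqc.intervalIntegrable _ _
  set F : ℝ → ℝ := fun u => f u * Real.sqrt (1 - u ^ 2 / r ^ 2) with hF
  have hFc : Continuous F := by
    exact hf.mul (Real.continuous_sqrt.comp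
      (continuous_const.sub ((continuous_pow 2).div_const _)))
  have hsub : (∫ ψ in (0:ℝ)..(π/2), F (r * Real.cos ψ) * (-r * Real.sin ψ))
      = ∫ σ in (r * Real.cos 0)..(r * Real.cos (π/2)), F σ := by
    have h := intervalIntegral.integral_comp_mul_deriv (a := (0:ℝ)) (b := π/2)
        (f := fun ψ => r * Real.cos ψ) (f' := fun ψ => -r * Real.sin ψ) (g := F)
        (fun x _ => by simpa [mul_comm, neg_mul, mul_neg] using (Real.hasDerivAt_cos x).const_mul r)
        ((Continuous.mul continuous_const Real.continuous_sin :
          Continuous fun ψ : ℝ => -r * Real.sin ψ).continuousOn) hFc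
    simpa [Function.comp] using h
  have hq_eq : (∫ ψ in (0:ℝ)..(π/2), q ψ)
      = (-1/r) * ∫ ψ in (0:ℝ)..(π/2), F (r * Real.cos ψ) * (-r * Real.sin ψ) := by
    rw [← intervalIntegral.integral_const_mul]
    apply intervalIntegral.integral_congr
    intro ψ hψ
    rw [Set.uIcc_of_le (by positivity)] at hψ
    obtain ⟨h0, h1'⟩ := hψ
    have hs : Real.sqrt (1 - (r * Real.cos ψ) ^ 2 / r ^ 2) = Real.sin ψ := by
      have : (r * Real.cos ψ) ^ 2 / r ^ 2 = Real.cos ψ ^ 2 := by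
        field_simp
      rw [this, show (1 : ℝ) - Real.cos ψ ^ 2 = Real.sin ψ ^ 2 from (Real.sin_sq ψ).symm]
      exact Real.sqrt_sq (Real.sin_nonneg_of_nonneg_of_le_pi h0 (by linarith [Real.pi_pos]))
    simp only [hq, hF, hs]
    field_simp
  rw [Real.cos_zero, Real.cos_pi_div_two, mul_one, mul_zero,
    intervalIntegral.integral_symm 0 r] at hsub
  have key : (∫ ψ in (0:ℝ)..(π/2), q ψ) = (1/r) * ∫ σ in (0:ℝ)..r, F σ := by
    rw [hq_eq, hsub]; ring
  rw [hsplit1, h1, hsplit2, h2, key]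
  ring

lemma shiftI (f : ℝ → ℝ) (r θ : ℝ) (w : ℝ → ℝ)
    (hwp : Function.Periodic w (2*π)) :
    (∫ φ in (0:ℝ)..(2*π), f (r * Real.cos (φ - θ)) * (-r * Real.sin (φ - θ)) * w φ)
      = ∫ ψ in (0:ℝ)..(2*π), f (r * Real.cos ψ) * (-r * Real.sin ψ) * w (ψ + θ) := by
  set G : ℝ → ℝ := fun ψ => f (r * Real.cos ψ) * (-r * Real.sin ψ) * w (ψ + θ) with hG
  have hGp : Function.Periodic G (2*π) := by
    intro x
    simp only [hG, Real.cos_add_two_pi, Real.sin_add_two_pi]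
    rw [show x + 2*π + θ = (x + θ) + 2*π by ring, hwp (x + θ)]
  have h1 : (∫ φ in (0:ℝ)..(2*π), f (r * Real.cos (φ - θ)) * (-r * Real.sin (φ - θ)) * w φ)
      = ∫ φ in (0:ℝ)..(2*π), G (φ - θ) := by
    congr 1; ext φ; simp only [hG, sub_add_cancel]
  rw [h1, intervalIntegral.integral_comp_sub_right G θ]
  have h2 := hGp.intervalIntegral_add_eq (-θ) 0
  rw [zero_add] at h2
  rw [show (0:ℝ) - θ = -θ by ring, show 2*π - θ = -θ + 2*π by ring, h2]

lemma split_lin (f : ℝ → ℝ) (hf : Continuous f) (r a b : ℝ)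
    (g : ℝ → ℝ)
    (hgeq : ∀ ψ, g ψ = a * (f (r * Real.cos ψ) * Real.sin ψ ^ 2)
        + b * (f (r * Real.cos ψ) * (Real.sin ψ * Real.cos ψ))) :
    (∫ ψ in (0:ℝ)..(2*π), g ψ)
      = a * ∫ ψ in (0:ℝ)..(2*π), f (r * Real.cos ψ) * Real.sin ψ ^ 2 := by
  have hc1 : Continuous fun ψ => f (r * Real.cos ψ) * Real.sin ψ ^ 2 :=
    (hf.comp (continuous_const.mul Real.continuous_cos)).mul (Real.continuous_sin.pow 2)
  have hc2 : Continuous fun ψ => f (r * Real.cos ψ) * (Real.sin ψ * Real.cos ψ) :=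
    (hf.comp (continuous_const.mul Real.continuous_cos)).mul
      (Real.continuous_sin.mul Real.continuous_cos)
  have : (∫ ψ in (0:ℝ)..(2*π), g ψ)
      = (∫ ψ in (0:ℝ)..(2*π), a * (f (r * Real.cos ψ) * Real.sin ψ ^ 2))
        + ∫ ψ in (0:ℝ)..(2*π), b * (f (r * Real.cos ψ) * (Real.sin ψ * Real.cos ψ)) := by
    rw [← intervalIntegral.integral_add (f := fun ψ => a * (f (r * Real.cos ψ) * Real.sin ψ ^ 2))
      (g := fun ψ => b * (f (r * Real.cos ψ) * (Real.sin ψ * Real.cos ψ)))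
      ((continuous_const.mul hc1).intervalIntegrable _ _)
      ((continuous_const.mul hc2).intervalIntegrable _ _)]
    exact intervalIntegral.integral_congr fun ψ _ => hgeq ψ
  rw [this, intervalIntegral.integral_const_mul, intervalIntegral.integral_const_mul,
    Jzero f r]
  ring


/-- for continuous even `f` and nonzero `v ∈ ℝ²`,
`f̄(v) = κ(|v|) · v / |v|`. -/
theorem fbar_eq_kappa_smul (f : ℝ → ℝ) (hf : Continuous f) (hfe : ∀ s : ℝ, f (-s) = f s)
    (v : E2) (hv : v ≠ 0) :
    fbar f v = (kappa f ‖v‖ / ‖v‖) • v := by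
  have hπ := Real.pi_pos
  set r := ‖v‖ with hrdef
  have hr : 0 < r := norm_pos_iff.mpr hv
  set z : ℂ := ⟨v 0, v 1⟩ with hzdef
  have hz0 : z ≠ 0 := by
    intro h
    apply hv
    have h0 : v 0 = 0 := by rw [show v 0 = z.re from rfl, h, Complex.zero_re]
    have h1 : v 1 = 0 := by rw [show v 1 = z.im from rfl, h, Complex.zero_im]
    ext i
    fin_cases i <;> simpa [h0, h1]
  have habs : ‖z‖ = r := by
    rw [Complex.norm_def, hrdef, EuclideanSpace.norm_eq]
    congr 1
    simp only [Fin.sum_univ_two, Real.norm_eq_abs, sq_abs]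
    rw [hzdef, Complex.normSq_mk]
    ring
  set θ := Complex.arg z with hθ
  have hv0 : v 0 = r * Real.cos θ := by
    rw [hθ, Complex.cos_arg hz0, habs, show z.re = v 0 from rfl]
    field_simp
  have hv1 : v 1 = r * Real.sin θ := by
    rw [hθ, Complex.sin_arg, habs, show z.im = v 1 from rfl]
    field_simp
  -- the vector integrand
  set E : ℝ → E2 := fun φ =>
    (f (v 0 * Real.cos φ + v 1 * Real.sin φ) * (-(v 0) * Real.sin φ + v 1 * Real.cos φ)) •
      vec2 (-Real.sin φ) (Real.cos φ) with hE
  have hsc : Continuous fun φ => f (v 0 * Real.cos φ + v 1 * Real.sin φ) *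
      (-(v 0) * Real.sin φ + v 1 * Real.cos φ) := by
    exact (hf.comp ((continuous_const.mul Real.continuous_cos).add
        (continuous_const.mul Real.continuous_sin))).mul
      ((continuous_const.mul Real.continuous_sin).add
        (continuous_const.mul Real.continuous_cos))
  have hvp : Continuous fun φ : ℝ => vec2 (-Real.sin φ) (Real.cos φ) := by
    apply (PiLp.continuous_toLp 2 _).comp
    apply continuous_pi
    intro i
    fin_cases i
    · exact Real.continuous_sin.neg
    · exact Real.continuous_cos
  have hEc : Continuous E := hsc.smul hvp
  have hEint : IntervalIntegrable E volume 0 (2*π) := hEc.intervalIntegrable _ _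
  have hIv := Ival f hf hfe hr
  set Iv := ∫ ψ in (0:ℝ)..(2*π), f (r * Real.cos ψ) * Real.sin ψ ^ 2 with hIvdef
  -- component computation
  have hsinp : Function.Periodic (fun φ => -Real.sin φ) (2*π) := fun x => by
    show -Real.sin (x + 2*π) = -Real.sin x
    rw [Real.sin_add_two_pi]
  have happ : ∀ i : Fin 2, (∫ φ in (0:ℝ)..(2*π), E φ) i
      = ∫ φ in (0:ℝ)..(2*π), E φ i := by
    intro i
    have hproj := (EuclideanSpace.proj (𝕜 := ℝ) i).intervalIntegral_comp_comm hEint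
    rw [show (∫ φ in (0:ℝ)..(2*π), E φ) i
        = EuclideanSpace.proj (𝕜 := ℝ) i (∫ φ in (0:ℝ)..(2*π), E φ) from rfl, ← hproj]
    rfl
  have hpolar : ∀ (φ : ℝ) (i : Fin 2), E φ i
      = f (r * Real.cos (φ - θ)) * (-r * Real.sin (φ - θ)) *
          (vec2 (-Real.sin φ) (Real.cos φ) i) := by
    intro φ i
    have e1 : v 0 * Real.cos φ + v 1 * Real.sin φ = r * Real.cos (φ - θ) := by
      rw [hv0, hv1, Real.cos_sub]; ring
    have e2 : -(v 0) * Real.sin φ + v 1 * Real.cos φ = -r * Real.sin (φ - θ) := by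
      rw [hv0, hv1, Real.sin_sub]; ring
    rw [hE]
    show (f (v 0 * Real.cos φ + v 1 * Real.sin φ) *
      (-(v 0) * Real.sin φ + v 1 * Real.cos φ)) * (vec2 (-Real.sin φ) (Real.cos φ) i) = _
    rw [e1, e2]
  have comp0 : (∫ φ in (0:ℝ)..(2*π), E φ) 0 = v 0 * Iv := by
    rw [happ 0]
    have h : (∫ φ in (0:ℝ)..(2*π), E φ 0)
        = ∫ φ in (0:ℝ)..(2*π), f (r * Real.cos (φ - θ)) * (-r * Real.sin (φ - θ)) *
            (-Real.sin φ) := by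
      apply intervalIntegral.integral_congr
      intro φ _
      show E φ 0 = _
      rw [hpolar φ 0]
      simp [vec2]
    rw [h, shiftI f r θ (fun φ => -Real.sin φ) hsinp,
      split_lin f hf r (r * Real.cos θ) (r * Real.sin θ) _ (fun ψ => by
        simp only [Real.sin_add]; ring), hv0]
  have comp1 : (∫ φ in (0:ℝ)..(2*π), E φ) 1 = v 1 * Iv := by
    rw [happ 1]
    have h : (∫ φ in (0:ℝ)..(2*π), E φ 1)
        = ∫ φ in (0:ℝ)..(2*π), f (r * Real.cos (φ - θ)) * (-r * Real.sin (φ - θ)) *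
            (Real.cos φ) := by
      apply intervalIntegral.integral_congr
      intro φ _
      show E φ 1 = _
      rw [hpolar φ 1]
      simp [vec2]
    rw [h, shiftI f r θ Real.cos Real.cos_periodic,
      split_lin f hf r (r * Real.sin θ) (-(r * Real.cos θ)) _ (fun ψ => by
        simp only [Real.cos_add]; ring), hv1]
  have comp : ∀ i : Fin 2, (∫ φ in (0:ℝ)..(2*π), E φ) i = v i * Iv := by
    intro i
    obtain ⟨(_|_|n), hi⟩ := i
    · exact comp0
    · exact comp1
    · omega
  -- assemble
  ext i
  have lhs : fbar f v i = (1 / (2*π)) * (v i * Iv) := by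
    rw [fbar]
    show (1 / (2*π)) * ((∫ φ in (0:ℝ)..(2*π), E φ) i) = _
    rw [comp i]
  rw [lhs, show ((kappa f r / r) • v) i = (kappa f r / r) * v i from rfl, hIv, kappa]
  field_simp
  ring
end
end

section
/- Let f : ℝ → ℝ be continuous and even, and let r > 0. Then (1/2π) ∫_{−π}^{π} f(r cos φ) · r sin²φ dφ = (2/π) ∫_0^r f(σ) √(1 − σ²/r²) dσ. -/
open Real Set Filter MeasureTheory
open scoped RealInnerProductSpace

noncomputable section

/-- `(1/2π) ∫_{-π}^{π} f(r cos φ) r sin²φ dφ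
  = (2/π) ∫₀^r f(σ) √(1 - σ²/r²) dσ` for continuous even `f` and `r > 0`. -/
theorem avg_integral_eq (f : ℝ → ℝ) (hf : Continuous f) (hfe : ∀ s : ℝ, f (-s) = f s)
    (r : ℝ) (hr : 0 < r) :
    (1 / (2 * π)) * ∫ φ in (-π)..π, f (r * Real.cos φ) * (r * Real.sin φ ^ 2) =
      (2 / π) * ∫ σ in (0:ℝ)..r, f σ * Real.sqrt (1 - σ ^ 2 / r ^ 2) := by
  set g : ℝ → ℝ := fun σ => f σ * Real.sqrt (1 - σ ^ 2 / r ^ 2) with hg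
  have hgc : Continuous g := by
    exact hf.mul ((continuous_const.sub ((continuous_pow 2).div_const _)).sqrt)
  -- evenness of g
  have hge : ∀ σ, g (-σ) = g σ := by
    intro σ; simp [hg, hfe, neg_pow]
  -- Step 1: symmetry of the φ-integral
  have h1 : (∫ φ in (-π)..π, f (r * Real.cos φ) * (r * Real.sin φ ^ 2)) =
      2 * ∫ φ in (0:ℝ)..π, f (r * Real.cos φ) * (r * Real.sin φ ^ 2) := by
    have hsplit := intervalIntegral.integral_add_adjacent_intervals
      (a := -π) (b := 0) (c := π)
      (f := fun φ => f (r * Real.cos φ) * (r * Real.sin φ ^ 2))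
      ((Continuous.intervalIntegrable (μ := MeasureTheory.volume) (by fun_prop) _ _))
      ((Continuous.intervalIntegrable (μ := MeasureTheory.volume) (by fun_prop) _ _))
    have hneg : (∫ φ in (0:ℝ)..π,
        f (r * Real.cos φ) * (r * Real.sin φ ^ 2)) =
        ∫ φ in (-π)..(0:ℝ), f (r * Real.cos φ) * (r * Real.sin φ ^ 2) := by
      have h := intervalIntegral.integral_comp_neg
        (a := 0) (b := π) (f := fun φ => f (r * Real.cos φ) * (r * Real.sin φ ^ 2))
      simp only [Real.cos_neg, Real.sin_neg, neg_sq, neg_zero, neg_neg] at h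
      exact h
    linarith [hsplit, hneg]
  -- Step 2: substitution σ = r cos φ on [0, π]
  have h2 : (∫ φ in (0:ℝ)..π, f (r * Real.cos φ) * (r * Real.sin φ ^ 2)) =
      ∫ σ in (-r)..r, g σ := by
    have hd : ∀ φ ∈ Set.uIcc (0:ℝ) π,
        HasDerivAt (fun x => r * Real.cos x) (-(r * Real.sin φ)) φ := by
      intro φ _
      simpa [mul_comm, mul_assoc] using (Real.hasDerivAt_cos φ).const_mul r
    have hsub := intervalIntegral.integral_comp_smul_deriv hd
      (by fun_prop) hgc
    simp only [Real.cos_zero, mul_one, Real.cos_pi, mul_neg_one, smul_eq_mul, Function.comp] at hsub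
    have hcongr : (∫ φ in (0:ℝ)..π, -(r * Real.sin φ) * g (r * Real.cos φ)) =
        ∫ φ in (0:ℝ)..π, -(f (r * Real.cos φ) * (r * Real.sin φ ^ 2)) := by
      apply intervalIntegral.integral_congr
      intro φ hφ
      rw [Set.uIcc_of_le Real.pi_pos.le] at hφ
      have hs : 0 ≤ Real.sin φ := Real.sin_nonneg_of_nonneg_of_le_pi hφ.1 hφ.2
      have hsq : Real.sqrt (1 - (r * Real.cos φ) ^ 2 / r ^ 2) = Real.sin φ := by
        have : 1 - (r * Real.cos φ) ^ 2 / r ^ 2 = Real.sin φ ^ 2 := by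
          field_simp [mul_pow]
          nlinarith [Real.sin_sq_add_cos_sq φ]
        rw [this, Real.sqrt_sq hs]
      simp only [hg, hsq]
      ring
    rw [hcongr, intervalIntegral.integral_neg] at hsub
    rw [← neg_neg (∫ φ in (0:ℝ)..π, f (r * Real.cos φ) * (r * Real.sin φ ^ 2)),
      hsub, ← intervalIntegral.integral_symm]
  -- Step 3: evenness of g
  have h3 : (∫ σ in (-r)..r, g σ) = 2 * ∫ σ in (0:ℝ)..r, g σ := by
    have hsplit := intervalIntegral.integral_add_adjacent_intervals
      (a := -r) (b := 0) (c := r) (f := g)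
      (hgc.intervalIntegrable (μ := MeasureTheory.volume) _ _) (hgc.intervalIntegrable (μ := MeasureTheory.volume) _ _)
    have hneg : (∫ σ in (0:ℝ)..r, g (-σ)) = ∫ σ in (-r)..(0:ℝ), g σ := by
      have h := intervalIntegral.integral_comp_neg (a := 0) (b := r) (f := g)
      simp only [neg_zero] at h
      exact h
    simp only [hge] at hneg
    linarith [hsplit, hneg]
  rw [h1, h2, h3]
  have hπ := Real.pi_ne_zero
  field_simp
end
end

section
/- The function κ satisfies condition (L2): there exists ρ > 0 such that κ(ρ) = 0, κ is negative on (0, ρ), and κ is positive, nondecreasing, and unbounded on (ρ, ∞). -/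
open Real Set Filter MeasureTheory
open scoped RealInnerProductSpace

noncomputable section

namespace KappaAux


noncomputable def KF (f : ℝ → ℝ) : ℝ → ℝ := fun s => ∫ σ in (0:ℝ)..s, f σ

lemma KF_hasDerivAt {f : ℝ → ℝ} (hf : Continuous f) (x : ℝ) : HasDerivAt (KF f) (f x) x :=
  intervalIntegral.integral_hasDerivAt_right (hf.intervalIntegrable _ _)
    (hf.stronglyMeasurableAtFilter _ _) hf.continuousAt

lemma KF_cont {f : ℝ → ℝ} (hf : Continuous f) : Continuous (KF f) :=
  continuous_iff_continuousAt.2 fun x => (KF_hasDerivAt hf x).continuousAt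

lemma KF_zero (f : ℝ → ℝ) : KF f 0 = 0 := intervalIntegral.integral_same

lemma KF_sub {f : ℝ → ℝ} (hf : Continuous f) (a b : ℝ) :
    KF f b - KF f a = ∫ σ in a..b, f σ :=
  intervalIntegral.integral_interval_sub_left (hf.intervalIntegrable _ _)
    (hf.intervalIntegrable _ _)

lemma sqrtInv_int : IntervalIntegrable (fun u : ℝ => (Real.sqrt (1-u))⁻¹) volume 0 1 := by
  have h1 : IntervalIntegrable (fun x : ℝ => x ^ (-(1/2) : ℝ)) volume 0 1 :=
    intervalIntegral.intervalIntegrable_rpow' (by norm_num)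
  have h2 := (h1.comp_sub_left 1).symm
  simp only [sub_self, sub_zero] at h2
  apply h2.mono_fun'
  · exact ((continuous_const.sub continuous_id).sqrt.measurable.inv).aestronglyMeasurable
  · rw [EventuallyLE, ae_restrict_iff' measurableSet_uIoc]
    filter_upwards with u hu
    rw [uIoc_of_le (by norm_num : (0:ℝ) ≤ 1)] at hu
    have h1u : 0 ≤ 1 - u := by linarith [hu.2]
    rw [Real.norm_eq_abs, abs_of_nonneg (inv_nonneg.2 (Real.sqrt_nonneg _)),
      Real.rpow_neg h1u, Real.sqrt_eq_rpow]

lemma II_of_bound (g : ℝ → ℝ) (K : ℝ)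
    (hm : AEStronglyMeasurable g (volume.restrict (Set.uIoc (0:ℝ) 1)))
    (hb : ∀ u ∈ Set.Ioc (0:ℝ) 1, |g u| ≤ K * (Real.sqrt (1-u))⁻¹ + K) :
    IntervalIntegrable g volume 0 1 := by
  have hdom : IntervalIntegrable (fun u : ℝ => K * (Real.sqrt (1-u))⁻¹ + K) volume 0 1 :=
    (sqrtInv_int.const_mul K).add intervalIntegrable_const
  apply hdom.mono_fun' hm
  rw [EventuallyLE, ae_restrict_iff' measurableSet_uIoc]
  filter_upwards with u hu
  rw [uIoc_of_le (by norm_num : (0:ℝ) ≤ 1)] at hu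
  simpa [Real.norm_eq_abs] using hb u hu

lemma ibp_limit (P Q P' Q' : ℝ → ℝ) (L : ℝ)
    (hP : ∀ u ∈ Set.Ico (0:ℝ) 1, HasDerivAt P (P' u) u)
    (hQ : ∀ u ∈ Set.Ico (0:ℝ) 1, HasDerivAt Q (Q' u) u)
    (hint : IntervalIntegrable (fun u => P' u * Q u + P u * Q' u) volume 0 1)
    (hlim : Tendsto (fun u => P u * Q u) (nhdsWithin 1 (Set.Iio 1)) (nhds L)) :
    ∫ u in (0:ℝ)..1, (P' u * Q u + P u * Q' u) = L - P 0 * Q 0 := by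
  set g : ℝ → ℝ := fun u => P' u * Q u + P u * Q' u with hg
  have keyb : ∀ b ∈ Set.Ico (0:ℝ) 1, ∫ u in (0:ℝ)..b, g u = P b * Q b - P 0 * Q 0 := by
    intro b hb
    refine intervalIntegral.integral_eq_sub_of_hasDerivAt (f := fun u => P u * Q u)
      (f' := g) (fun x hx => ?_) (hint.mono_set ?_)
    · rw [uIcc_of_le hb.1] at hx
      exact (hP x ⟨hx.1, lt_of_le_of_lt hx.2 hb.2⟩).mul (hQ x ⟨hx.1, lt_of_le_of_lt hx.2 hb.2⟩)
    · rw [uIcc_of_le hb.1, uIcc_of_le (by norm_num : (0:ℝ) ≤ 1)]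
      exact Icc_subset_Icc le_rfl hb.2.le
  haveI : (nhdsWithin (1:ℝ) (Set.Ioo (0:ℝ) 1)).NeBot := by
    apply mem_closure_iff_nhdsWithin_neBot.1
    rw [closure_Ioo (by norm_num : (0:ℝ) ≠ 1)]
    exact ⟨by norm_num, le_refl 1⟩
  have h1 : Tendsto (fun b => ∫ u in (0:ℝ)..b, g u) (nhdsWithin 1 (Set.Ioo (0:ℝ) 1))
      (nhds (∫ u in (0:ℝ)..1, g u)) := by
    have := intervalIntegral.continuousWithinAt_primitive (μ := volume) (f := g)
      (a := 0) (b₀ := 1) (b₁ := 0) (b₂ := 1) (by simp) (by simpa using hint)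
    exact (this.mono_left (nhdsWithin_mono _ Ioo_subset_Icc_self))
  have h2 : Tendsto (fun b => P b * Q b - P 0 * Q 0) (nhdsWithin 1 (Set.Ioo (0:ℝ) 1))
      (nhds (L - P 0 * Q 0)) :=
    (hlim.mono_left (nhdsWithin_mono _ Ioo_subset_Iio_self)).sub_const _
  have heq : (fun b => ∫ u in (0:ℝ)..b, g u) =ᶠ[nhdsWithin 1 (Set.Ioo (0:ℝ) 1)]
      (fun b => P b * Q b - P 0 * Q 0) :=
    eventually_of_mem self_mem_nhdsWithin fun b hb => keyb b ⟨hb.1.le, hb.2⟩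
  exact tendsto_nhds_unique (h1.congr' heq) h2



lemma sqrt_pos_of_lt_one {u : ℝ} (hu0 : -1 < u) (hu : u < 1) : 0 < Real.sqrt (1 - u^2) :=
  Real.sqrt_pos.2 (by nlinarith)

lemma sqrt_one_sub_sq_le_one {u : ℝ} : Real.sqrt (1 - u^2) ≤ 1 :=
  Real.sqrt_le_one.2 (by nlinarith [sq_nonneg u])

lemma inv_sqrt_le {u : ℝ} (h0 : 0 ≤ u) (h1 : u ≤ 1) :
    (Real.sqrt (1 - u^2))⁻¹ ≤ (Real.sqrt (1-u))⁻¹ := by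
  rcases eq_or_lt_of_le h1 with rfl | hlt
  · simp
  · apply inv_anti₀
    · exact Real.sqrt_pos.2 (by linarith)
    · apply Real.sqrt_le_sqrt; nlinarith

lemma frac_le {x u : ℝ} (hx0 : 0 ≤ x) (hx : x ≤ 1) (h0 : 0 ≤ u) (h1 : u ≤ 1) :
    x / Real.sqrt (1 - u^2) ≤ (Real.sqrt (1-u))⁻¹ := by
  rcases eq_or_lt_of_le h1 with rfl | hlt
  · norm_num
  · have hs : 0 < Real.sqrt (1 - u^2) := sqrt_pos_of_lt_one (by linarith) hlt
    calc x / Real.sqrt (1 - u^2) ≤ 1 / Real.sqrt (1 - u^2) := by gcongr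
      _ = (Real.sqrt (1 - u^2))⁻¹ := one_div _
      _ ≤ (Real.sqrt (1-u))⁻¹ := inv_sqrt_le h0 h1

lemma m_nonneg {u : ℝ} (h0 : 0 ≤ u) : 0 ≤ u / Real.sqrt (1 - u^2) :=
  div_nonneg h0 (Real.sqrt_nonneg _)

lemma wg_nonneg (u : ℝ) : 0 ≤ u^2 / Real.sqrt (1 - u^2) :=
  div_nonneg (sq_nonneg _) (Real.sqrt_nonneg _)

lemma m_le {u : ℝ} (h0 : 0 ≤ u) (h1 : u ≤ 1) :
    u / Real.sqrt (1 - u^2) ≤ (Real.sqrt (1-u))⁻¹ := frac_le h0 h1 h0 h1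

lemma wg_le {u : ℝ} (h0 : 0 ≤ u) (h1 : u ≤ 1) :
    u^2 / Real.sqrt (1 - u^2) ≤ (Real.sqrt (1-u))⁻¹ :=
  frac_le (sq_nonneg u) (by nlinarith) h0 h1

lemma meas_m : Measurable fun u : ℝ => u / Real.sqrt (1 - u^2) :=
  measurable_id.div ((continuous_const.sub (continuous_pow 2)).sqrt).measurable

lemma meas_wg : Measurable fun u : ℝ => u^2 / Real.sqrt (1 - u^2) :=
  (measurable_id.pow_const 2).div ((continuous_const.sub (continuous_pow 2)).sqrt).measurable

-- derivative of √(1-u²)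
lemma hasDerivAt_V {u : ℝ} (hu0 : -1 < u) (hu : u < 1) :
    HasDerivAt (fun u : ℝ => Real.sqrt (1 - u^2)) (-(u / Real.sqrt (1 - u^2))) u := by
  have h1 : HasDerivAt (fun u : ℝ => 1 - u^2) (-(2*u)) u := by
    simpa using ((hasDerivAt_pow 2 u).const_sub 1)
  have hpos : (0:ℝ) < 1 - u^2 := by nlinarith
  have h2 := (Real.hasDerivAt_sqrt (ne_of_gt hpos)).comp u h1
  refine h2.congr_deriv ?_
  have hs : Real.sqrt (1 - u^2) ≠ 0 := (sqrt_pos_of_lt_one hu0 hu).ne'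
  field_simp

-- derivative of u²/√(1-u²)
lemma hasDerivAt_W {u : ℝ} (hu0 : -1 < u) (hu : u < 1) :
    HasDerivAt (fun u : ℝ => u^2 / Real.sqrt (1 - u^2))
      ((2*u*Real.sqrt (1 - u^2) + u^3 / Real.sqrt (1 - u^2)) / (1 - u^2)) u := by
  have hs : 0 < Real.sqrt (1 - u^2) := sqrt_pos_of_lt_one hu0 hu
  have h2 := (hasDerivAt_pow 2 u).div (hasDerivAt_V hu0 hu) hs.ne'
  refine h2.congr_deriv ?_
  rw [Real.sq_sqrt (by nlinarith : (0:ℝ) ≤ 1 - u^2)]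
  field_simp
  ring



noncomputable def Qd (u : ℝ) : ℝ :=
  (2*u*Real.sqrt (1-u^2) + u^3 / Real.sqrt (1-u^2)) / (1-u^2)

lemma Qd_one : Qd 1 = 0 := by simp [Qd]

lemma Qd_nonneg {u : ℝ} (h0 : 0 ≤ u) (h1 : u ≤ 1) : 0 ≤ Qd u := by
  rcases eq_or_lt_of_le h1 with rfl | hlt
  · simp [Qd]
  · have hs : 0 ≤ Real.sqrt (1 - u^2) := Real.sqrt_nonneg _
    apply div_nonneg _ (by nlinarith)
    have : 0 ≤ u^3 / Real.sqrt (1-u^2) := div_nonneg (by positivity) hs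
    nlinarith

lemma Qd_pos {u : ℝ} (h0 : 0 < u) (h1 : u < 1) : 0 < Qd u := by
  have hs : 0 < Real.sqrt (1 - u^2) := Real.sqrt_pos.2 (by nlinarith)
  apply div_pos _ (by nlinarith)
  have : 0 < u^3 / Real.sqrt (1-u^2) := div_pos (by positivity) hs
  nlinarith

lemma Qd_meas : Measurable Qd := by
  apply Measurable.div _ (continuous_const.sub (continuous_pow 2)).measurable
  apply Measurable.add
  · exact ((continuous_const.mul continuous_id).mul
      ((continuous_const.sub (continuous_pow 2)).sqrt)).measurable
  · exact (measurable_id.pow_const 3).div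
      ((continuous_const.sub (continuous_pow 2)).sqrt).measurable

lemma Qd_bound {u : ℝ} (h0 : 0 ≤ u) (h1 : u ≤ 1) :
    (1-u) * Qd u ≤ 2 + (Real.sqrt (1-u))⁻¹ := by
  rcases eq_or_lt_of_le h1 with rfl | hlt
  · norm_num [Qd]
  · have hs : 0 < Real.sqrt (1 - u^2) := Real.sqrt_pos.2 (by nlinarith)
    have key : (1-u) * Qd u = (2*u*Real.sqrt (1-u^2) + u^3 / Real.sqrt (1-u^2)) / (1+u) := by
      rw [Qd]
      have h12 : (1:ℝ) - u^2 ≠ 0 := by nlinarith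
      have h1u : (1:ℝ) + u ≠ 0 := by linarith
      field_simp
      ring
    rw [key]
    have h2 : (2*u*Real.sqrt (1-u^2) + u^3 / Real.sqrt (1-u^2)) / (1+u)
        ≤ 2*u*Real.sqrt (1-u^2) + u^3 / Real.sqrt (1-u^2) := by
      apply div_le_self _ (by linarith)
      have : 0 ≤ u^3 / Real.sqrt (1-u^2) := div_nonneg (by positivity) hs.le
      nlinarith [Real.sqrt_nonneg (1-u^2)]
    refine h2.trans (add_le_add ?_ ?_)
    · nlinarith [Real.sqrt_nonneg (1-u^2),
        (Real.sqrt_le_one.2 (by nlinarith : 1-u^2 ≤ 1) : Real.sqrt (1-u^2) ≤ 1)]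
    · exact frac_le (by positivity) (by nlinarith) h0 h1


section WithF
variable {f : ℝ → ℝ}

lemma exists_bd (hg : Continuous f) {t : ℝ} (ht : 0 ≤ t) :
    ∃ C, 0 ≤ C ∧ ∀ x ∈ Set.Icc (0:ℝ) t, |f x| ≤ C := by
  obtain ⟨C, hC⟩ := (isCompact_Icc (a := (0:ℝ)) (b := t)).exists_bound_of_continuousOn
    hg.continuousOn
  exact ⟨max C 0, le_max_right _ _, fun x hx => (hC x hx).trans (le_max_left _ _)⟩

lemma meas_comp_mul (hg : Continuous f) (s : ℝ) :
    Continuous fun u : ℝ => f (s * u) :=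
  hg.comp (continuous_const.mul continuous_id)

-- integrability of  u ↦ KF f (s u) · u/√(1-u²)
lemma int_g2 (hf : Continuous f) {s : ℝ} (hs : 0 < s) :
    IntervalIntegrable (fun u => KF f (s*u) * (u / Real.sqrt (1-u^2))) volume 0 1 := by
  obtain ⟨M, hM0, hM⟩ := exists_bd (KF_cont hf) hs.le
  apply II_of_bound _ M
  · exact ((meas_comp_mul (KF_cont hf) s).measurable.mul meas_m).aestronglyMeasurable
  · intro u hu
    rw [abs_mul, abs_of_nonneg (m_nonneg hu.1.le)]
    have h1 : |KF f (s*u)| ≤ M := hM _ ⟨mul_nonneg hs.le hu.1.le, by nlinarith [hu.1.le, hu.2]⟩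
    have h2 := m_le hu.1.le hu.2
    have h3 : (0:ℝ) ≤ (Real.sqrt (1-u))⁻¹ := by positivity
    nlinarith [m_nonneg (u := u) hu.1.le, abs_nonneg (KF f (s*u))]

-- integrability of  u ↦ f (r u) · u²/√(1-u²)
lemma int_g3 (hf : Continuous f) {r : ℝ} (hr : 0 < r) :
    IntervalIntegrable (fun u => f (r*u) * (u^2 / Real.sqrt (1-u^2))) volume 0 1 := by
  obtain ⟨C, hC0, hC⟩ := exists_bd hf hr.le
  apply II_of_bound _ C
  · exact ((meas_comp_mul hf r).measurable.mul meas_wg).aestronglyMeasurable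
  · intro u hu
    rw [abs_mul, abs_of_nonneg (wg_nonneg u)]
    have h1 : |f (r*u)| ≤ C := hC _ ⟨mul_nonneg hr.le hu.1.le, by nlinarith [hu.1.le, hu.2]⟩
    have h2 := wg_le hu.1.le hu.2
    have h3 : (0:ℝ) ≤ (Real.sqrt (1-u))⁻¹ := by positivity
    nlinarith [wg_nonneg u, abs_nonneg (f (r*u))]

lemma KF_diff_le (hf : Continuous f) {r u C : ℝ} (hr : 0 < r)
    (hC : ∀ x ∈ Set.Icc (0:ℝ) r, |f x| ≤ C) (h0 : 0 ≤ u) (h1 : u ≤ 1) :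
    |KF f r - KF f (r*u)| ≤ C * r * (1-u) := by
  rw [show KF f r - KF f (r*u) = ∫ σ in (r*u)..r, f σ by
    rw [← KF_sub hf]]
  have hb := intervalIntegral.norm_integral_le_of_norm_le_const (C := C)
    (f := f) (a := r*u) (b := r) ?_
  · rw [Real.norm_eq_abs] at hb
    refine hb.trans ?_
    rw [abs_of_nonneg (by nlinarith : (0:ℝ) ≤ r - r*u)]
    nlinarith
  · intro x hx
    rw [uIoc_of_le (by nlinarith : r*u ≤ r)] at hx
    exact hC x ⟨le_trans (by positivity) hx.1.le, hx.2⟩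

-- integrability of  u ↦ (KF f r - KF f (r u)) · Qd u
lemma int_g4 (hf : Continuous f) {r : ℝ} (hr : 0 < r) :
    IntervalIntegrable (fun u => (KF f r - KF f (r*u)) * Qd u) volume 0 1 := by
  obtain ⟨C, hC0, hC⟩ := exists_bd hf hr.le
  apply II_of_bound _ (2*C*r)
  · exact ((continuous_const.sub (meas_comp_mul (KF_cont hf) r)).measurable.mul
      Qd_meas).aestronglyMeasurable
  · intro u hu
    have hQ0 := Qd_nonneg hu.1.le hu.2
    rw [abs_mul, abs_of_nonneg hQ0]
    have h1 : |KF f r - KF f (r*u)| ≤ C * r * (1-u) := KF_diff_le hf hr hC hu.1.le hu.2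
    have h2 : (1-u) * Qd u ≤ 2 + (Real.sqrt (1-u))⁻¹ := Qd_bound hu.1.le hu.2
    have h3 : (0:ℝ) ≤ (Real.sqrt (1-u))⁻¹ := by positivity
    have h4 : |KF f r - KF f (r*u)| * Qd u ≤ (C*r) * ((1-u) * Qd u) := by
      rw [show (C*r) * ((1-u)*Qd u) = (C*r*(1-u)) * Qd u by ring]
      exact mul_le_mul_of_nonneg_right h1 hQ0
    refine h4.trans ?_
    have h5 : (C*r) * ((1-u) * Qd u) ≤ (C*r) * (2 + (Real.sqrt (1-u))⁻¹) :=
      mul_le_mul_of_nonneg_left h2 (by positivity)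
    refine h5.trans ?_
    nlinarith [mul_nonneg (mul_nonneg hC0 hr.le) h3]

-- the key integration-by-parts identity  s·∫ f(su)√(1-u²) = ∫ KF f(su)·u/√(1-u²)
lemma Brep (hf : Continuous f) {s : ℝ} (hs : 0 < s) :
    s * ∫ u in (0:ℝ)..1, f (s*u) * Real.sqrt (1-u^2)
      = ∫ u in (0:ℝ)..1, KF f (s*u) * (u / Real.sqrt (1-u^2)) := by
  have hint1 : IntervalIntegrable (fun u => (f (s*u) * s) * Real.sqrt (1-u^2)) volume 0 1 :=
    (((meas_comp_mul hf s).mul continuous_const).mul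
      ((continuous_const.sub (continuous_pow 2)).sqrt)).intervalIntegrable 0 1
  have hint2 : IntervalIntegrable
      (fun u => KF f (s*u) * (-(u / Real.sqrt (1-u^2)))) volume 0 1 := by
    simp only [mul_neg]
    exact (int_g2 hf hs).neg
  have hibp := ibp_limit (fun u => KF f (s*u)) (fun u => Real.sqrt (1-u^2))
    (fun u => f (s*u) * s) (fun u => -(u / Real.sqrt (1-u^2))) 0
    (fun u hu => by
      have h := (KF_hasDerivAt hf (s*u)).comp u ((hasDerivAt_id u).const_mul s)
      refine h.congr_deriv ?_
      ring)
    (fun u hu => hasDerivAt_V (by linarith [hu.1]) hu.2)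
    (hint1.add hint2)
    (by
      have hc : Continuous (fun u : ℝ => KF f (s*u) * Real.sqrt (1-u^2)) :=
        (meas_comp_mul (KF_cont hf) s).mul ((continuous_const.sub (continuous_pow 2)).sqrt)
      have h := (hc.tendsto 1).mono_left
        (nhdsWithin_le_nhds : nhdsWithin (1:ℝ) (Set.Iio 1) ≤ nhds 1)
      simpa [one_pow, sub_self, Real.sqrt_zero, mul_zero] using h)
  rw [intervalIntegral.integral_add hint1 hint2] at hibp
  simp only [mul_zero, Real.sqrt_one, KF_zero, zero_mul, mul_one, zero_sub, neg_zero,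
    mul_neg] at hibp
  rw [intervalIntegral.integral_neg] at hibp
  have e1 : ∫ u in (0:ℝ)..1, (f (s*u) * s) * Real.sqrt (1-u^2)
      = s * ∫ u in (0:ℝ)..1, f (s*u) * Real.sqrt (1-u^2) := by
    rw [← intervalIntegral.integral_const_mul]
    apply intervalIntegral.integral_congr
    intro u _; ring
  rw [e1] at hibp
  linarith [hibp]

-- second IBP:  r·∫ f(ru)·u²/√(1-u²) = ∫ (KF f r - KF f (ru))·Qd u
lemma Ieq (hf : Continuous f) {r : ℝ} (hr : 0 < r) :
    r * ∫ u in (0:ℝ)..1, f (r*u) * (u^2 / Real.sqrt (1-u^2))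
      = ∫ u in (0:ℝ)..1, (KF f r - KF f (r*u)) * Qd u := by
  obtain ⟨C, hC0, hC⟩ := exists_bd hf hr.le
  have hint1 : IntervalIntegrable
      (fun u => (f (r*u) * r) * (u^2 / Real.sqrt (1-u^2))) volume 0 1 := by
    have : (fun u => (f (r*u) * r) * (u^2 / Real.sqrt (1-u^2)))
        = fun u => (f (r*u) * (u^2 / Real.sqrt (1-u^2))) * r := by funext u; ring
    rw [this]
    exact (int_g3 hf hr).mul_const r
  have hint2 : IntervalIntegrable
      (fun u => (KF f (r*u) - KF f r) * Qd u) volume 0 1 := by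
    have : (fun u => (KF f (r*u) - KF f r) * Qd u)
        = fun u => -((KF f r - KF f (r*u)) * Qd u) := by funext u; ring
    rw [this]
    exact (int_g4 hf hr).neg
  have hibp := ibp_limit (fun u => KF f (r*u) - KF f r)
    (fun u => u^2 / Real.sqrt (1-u^2))
    (fun u => f (r*u) * r) Qd 0
    (fun u hu => by
      have h := ((KF_hasDerivAt hf (r*u)).comp u
        ((hasDerivAt_id u).const_mul r)).sub_const (KF f r)
      simpa [mul_comm] using h)
    (fun u hu => hasDerivAt_W (by linarith [hu.1]) hu.2)
    (hint1.add hint2)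
    (by
      apply squeeze_zero_norm' (a := fun u => C * r * Real.sqrt (1-u))
      · filter_upwards [inter_mem_nhdsWithin (Set.Iio 1) (Ioi_mem_nhds one_pos)]
          with u hu
        obtain ⟨hu1, hu0⟩ : u < 1 ∧ (0:ℝ) < u := ⟨hu.1, hu.2⟩
        have hsq : 0 < Real.sqrt (1-u) := Real.sqrt_pos.2 (by linarith)
        have hP : |KF f (r*u) - KF f r| ≤ C * r * (1-u) := by
          rw [abs_sub_comm]; exact KF_diff_le hf hr hC hu0.le hu1.le
        have hQ : u^2 / Real.sqrt (1-u^2) ≤ (Real.sqrt (1-u))⁻¹ := wg_le hu0.le hu1.le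
        rw [Real.norm_eq_abs, abs_mul, abs_of_nonneg (wg_nonneg u)]
        have h6 : (1-u) * (Real.sqrt (1-u))⁻¹ = Real.sqrt (1-u) := by
          rw [← div_eq_mul_inv]; exact Real.div_sqrt
        calc |KF f (r*u) - KF f r| * (u^2 / Real.sqrt (1-u^2))
            ≤ (C * r * (1-u)) * (Real.sqrt (1-u))⁻¹ := by
              exact mul_le_mul hP hQ (wg_nonneg u) (mul_nonneg (mul_nonneg hC0 hr.le) (by linarith))
          _ = C * r * Real.sqrt (1-u) := by rw [mul_assoc, h6]
      · have hc : Continuous (fun u : ℝ => C * r * Real.sqrt (1-u)) :=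
          (continuous_const.mul (continuous_const.sub continuous_id).sqrt).congr
            (fun u => rfl)
        have h := (hc.tendsto 1).mono_left
          (nhdsWithin_le_nhds : nhdsWithin (1:ℝ) (Set.Iio 1) ≤ nhds 1)
        simpa using h)
  rw [intervalIntegral.integral_add hint1 hint2] at hibp
  have e0 : (KF f (r*0) - KF f r) * ((0:ℝ)^2 / Real.sqrt (1-(0:ℝ)^2)) = 0 := by
    norm_num
  rw [e0] at hibp
  have e1 : ∫ u in (0:ℝ)..1, (f (r*u) * r) * (u^2 / Real.sqrt (1-u^2))
      = r * ∫ u in (0:ℝ)..1, f (r*u) * (u^2 / Real.sqrt (1-u^2)) := by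
    rw [← intervalIntegral.integral_const_mul]
    apply intervalIntegral.integral_congr
    intro u _; ring
  have e2 : ∫ u in (0:ℝ)..1, (KF f (r*u) - KF f r) * Qd u
      = - ∫ u in (0:ℝ)..1, (KF f r - KF f (r*u)) * Qd u := by
    rw [← intervalIntegral.integral_neg]
    apply intervalIntegral.integral_congr
    intro u _; ring
  rw [e1, e2] at hibp
  linarith [hibp]

lemma prodInt (hf : Continuous f) {s t : ℝ} (hs : 0 < s) (hst : s ≤ t) :
    Integrable (Function.uncurry fun u r => f (r*u) * (u^2 / Real.sqrt (1-u^2)))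
      ((volume.restrict (Set.Ioc (0:ℝ) 1)).prod (volume.restrict (Set.Ioc s t))) := by
  obtain ⟨C, hC0, hC⟩ := exists_bd hf (hs.le.trans hst)
  have hg1 : IntegrableOn (fun u : ℝ => C * (Real.sqrt (1-u))⁻¹ + C)
      (Set.Ioc (0:ℝ) 1) volume :=
    ((sqrtInv_int.const_mul C).add (intervalIntegrable_const (c := C))).1
  have hg2 : IntegrableOn (fun _ : ℝ => (1:ℝ)) (Set.Ioc s t) volume := by
    rw [integrableOn_const_iff]
    exact Or.inr measure_Ioc_lt_top
  have hdom := hg1.mul_prod hg2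
  apply Integrable.mono' hdom
  · exact ((hf.comp (continuous_snd.mul continuous_fst)).measurable.mul
      (meas_wg.comp measurable_fst)).aestronglyMeasurable
  · rw [Measure.prod_restrict, ae_restrict_iff' (measurableSet_Ioc.prod measurableSet_Ioc)]
    filter_upwards with p hp
    obtain ⟨hu, hr⟩ : p.1 ∈ Set.Ioc (0:ℝ) 1 ∧ p.2 ∈ Set.Ioc s t := hp
    have harg : p.2 * p.1 ∈ Set.Icc (0:ℝ) t :=
      ⟨mul_nonneg (hs.le.trans hr.1.le) hu.1.le,
        by nlinarith [hr.1, hr.2, hu.1, hu.2]⟩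
    have h1 : |f (p.2 * p.1)| ≤ C := hC _ harg
    have h2 := wg_le hu.1.le hu.2
    have h3 : (0:ℝ) ≤ (Real.sqrt (1-p.1))⁻¹ := by positivity
    rw [Function.uncurry]
    simp only [Real.norm_eq_abs, abs_mul, mul_one]
    rw [abs_of_nonneg (wg_nonneg p.1)]
    nlinarith [wg_nonneg p.1, abs_nonneg (f (p.2 * p.1))]

lemma increment (hf : Continuous f) {s t : ℝ} (hs : 0 < s) (hst : s ≤ t) :
    (∫ u in (0:ℝ)..1, KF f (t*u) * (u / Real.sqrt (1-u^2)))
      - ∫ u in (0:ℝ)..1, KF f (s*u) * (u / Real.sqrt (1-u^2))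
    = ∫ r in s..t, (∫ u in (0:ℝ)..1, f (r*u) * (u^2 / Real.sqrt (1-u^2))) := by
  have ht0 : 0 < t := lt_of_lt_of_le hs hst
  rw [← intervalIntegral.integral_sub (int_g2 hf ht0) (int_g2 hf hs)]
  have e2 : ∀ u : ℝ, KF f (t*u) * (u / Real.sqrt (1-u^2))
      - KF f (s*u) * (u / Real.sqrt (1-u^2))
      = ∫ r in s..t, f (r*u) * (u^2 / Real.sqrt (1-u^2)) := by
    intro u
    have h1 : KF f (t*u) - KF f (s*u) = u * ∫ r in s..t, f (r*u) := by
      rw [KF_sub hf (s*u) (t*u), ← intervalIntegral.smul_integral_comp_mul_right f u,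
        smul_eq_mul]
    calc KF f (t*u) * (u / Real.sqrt (1-u^2)) - KF f (s*u) * (u / Real.sqrt (1-u^2))
        = (KF f (t*u) - KF f (s*u)) * (u / Real.sqrt (1-u^2)) := by ring
      _ = (u * ∫ r in s..t, f (r*u)) * (u / Real.sqrt (1-u^2)) := by rw [h1]
      _ = (∫ r in s..t, f (r*u)) * (u^2 / Real.sqrt (1-u^2)) := by ring
      _ = ∫ r in s..t, f (r*u) * (u^2 / Real.sqrt (1-u^2)) :=
          (intervalIntegral.integral_mul_const _ _).symm
  rw [intervalIntegral.integral_congr (fun u _ => e2 u)]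
  rw [intervalIntegral.integral_of_le (zero_le_one), intervalIntegral.integral_of_le hst]
  simp_rw [intervalIntegral.integral_of_le hst,
    intervalIntegral.integral_of_le (zero_le_one)]
  exact integral_integral_swap (prodInt hf hs hst)

lemma int_m : IntervalIntegrable (fun u : ℝ => u / Real.sqrt (1-u^2)) volume 0 1 := by
  apply II_of_bound _ 1 meas_m.aestronglyMeasurable
  intro u hu
  rw [abs_of_nonneg (m_nonneg hu.1.le)]
  have := m_le hu.1.le hu.2
  have : (0:ℝ) ≤ (Real.sqrt (1-u))⁻¹ := by positivity
  linarith [m_le hu.1.le hu.2]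

lemma int_wg : IntervalIntegrable (fun u : ℝ => u^2 / Real.sqrt (1-u^2)) volume 0 1 := by
  apply II_of_bound _ 1 meas_wg.aestronglyMeasurable
  intro u hu
  rw [abs_of_nonneg (wg_nonneg u)]
  have : (0:ℝ) ≤ (Real.sqrt (1-u))⁻¹ := by positivity
  linarith [wg_le hu.1.le hu.2]

lemma uIcc_sub {c d : ℝ} (hc : 0 ≤ c) (hcd : c ≤ d) (hd : d ≤ 1) :
    Set.uIcc c d ⊆ Set.uIcc (0:ℝ) 1 := by
  rw [uIcc_of_le hcd, uIcc_of_le (zero_le_one)]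
  exact Set.Icc_subset_Icc hc hd

section Signs
variable {s₀ : ℝ} (hs₀ : 0 < s₀) (hzero : KF f s₀ = 0)
  (hneg : ∀ x ∈ Set.Ioo (0:ℝ) s₀, KF f x < 0)
  (hpos : ∀ x ∈ Set.Ioi s₀, 0 < KF f x)
  (hmono : MonotoneOn (KF f) (Set.Ioi s₀))

include hs₀ hzero hneg hpos hmono

lemma hKey {r x : ℝ} (hr : s₀ ≤ r) (hx0 : 0 ≤ x) (hxr : x ≤ r) : KF f x ≤ KF f r := by
  have hFr : 0 ≤ KF f r := by
    rcases eq_or_lt_of_le hr with rfl | h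
    · exact le_of_eq hzero.symm
    · exact (hpos r h).le
  rcases le_or_gt x s₀ with hxs | hxs
  · rcases eq_or_lt_of_le hx0 with rfl | hx0'
    · rw [KF_zero]; exact hFr
    · rcases eq_or_lt_of_le hxs with rfl | hxs'
      · rw [hzero]; exact hFr
      · exact (hneg x ⟨hx0', hxs'⟩).le.trans hFr
  · exact hmono hxs (lt_of_lt_of_le hxs hxr) hxr

lemma Ipos (hf : Continuous f) {r : ℝ} (hr : s₀ < r) :
    0 < ∫ u in (0:ℝ)..1, f (r*u) * (u^2 / Real.sqrt (1-u^2)) := by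
  have hr0 : 0 < r := hs₀.trans hr
  have key : 0 < ∫ u in (0:ℝ)..1, (KF f r - KF f (r*u)) * Qd u := by
    set c : ℝ := s₀ / r with hc
    have hc0 : 0 < c := div_pos hs₀ hr0
    have hc1 : c < 1 := (div_lt_one hr0).2 hr
    have hint4 := int_g4 hf hr0
    have h1 := hint4.mono_set (uIcc_sub le_rfl hc0.le hc1.le)
    have h2 := hint4.mono_set (uIcc_sub hc0.le hc1.le le_rfl)
    rw [← intervalIntegral.integral_add_adjacent_intervals h1 h2]
    have hpiece1 : 0 < ∫ u in (0:ℝ)..c, (KF f r - KF f (r*u)) * Qd u := by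
      apply intervalIntegral.intervalIntegral_pos_of_pos_on h1 _ hc0
      intro u hu
      have hru : r * u ∈ Set.Ioo (0:ℝ) s₀ := by
        constructor
        · exact mul_pos hr0 hu.1
        · calc r * u < r * c := by exact mul_lt_mul_of_pos_left hu.2 hr0
            _ = s₀ := by rw [hc]; field_simp
      have hQ := Qd_pos hu.1 (hu.2.trans hc1)
      have := hneg _ hru
      have := hpos r hr
      nlinarith
    have hpiece2 : 0 ≤ ∫ u in c..1, (KF f r - KF f (r*u)) * Qd u := by
      apply intervalIntegral.integral_nonneg hc1.le
      intro u hu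
      have hu0 : 0 ≤ u := hc0.le.trans hu.1
      apply mul_nonneg _ (Qd_nonneg hu0 hu.2)
      rw [sub_nonneg]
      exact hKey hs₀ hzero hneg hpos hmono hr.le (mul_nonneg hr0.le hu0)
        (by nlinarith [hu.2, hr0.le])
    linarith
  rw [← Ieq hf hr0] at key
  nlinarith

lemma negB (hf : Continuous f) {s : ℝ} (hs : 0 < s) (hss : s ≤ s₀) :
    (∫ u in (0:ℝ)..1, KF f (s*u) * (u / Real.sqrt (1-u^2))) < 0 := by
  have h : 0 < ∫ u in (0:ℝ)..1, -(KF f (s*u) * (u / Real.sqrt (1-u^2))) := by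
    apply intervalIntegral.intervalIntegral_pos_of_pos_on (int_g2 hf hs).neg _ zero_lt_one
    intro u hu
    simp only [Pi.neg_apply]
    have hsu : s * u ∈ Set.Ioo (0:ℝ) s₀ := by
      constructor
      · exact mul_pos hs hu.1
      · calc s * u < s * 1 := by exact mul_lt_mul_of_pos_left hu.2 hs
          _ = s := mul_one s
          _ ≤ s₀ := hss
    have hm : 0 < u / Real.sqrt (1 - u^2) :=
      div_pos hu.1 (sqrt_pos_of_lt_one (by linarith [hu.1]) hu.2)
    have := hneg _ hsu
    nlinarith
  rw [intervalIntegral.integral_neg] at h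
  linarith

end Signs

lemma int_I (hf : Continuous f) {a b : ℝ} (ha : 0 < a) (hab : a ≤ b) :
    IntervalIntegrable
      (fun r => ∫ u in (0:ℝ)..1, f (r*u) * (u^2 / Real.sqrt (1-u^2))) volume a b := by
  rw [intervalIntegrable_iff, uIoc_of_le hab]
  have hmarg := (prodInt hf ha hab).integral_prod_right
  have heq : (fun r => ∫ u in (0:ℝ)..1, f (r*u) * (u^2 / Real.sqrt (1-u^2)))
      = fun r => ∫ u, (Function.uncurry fun u r => f (r*u) * (u^2 / Real.sqrt (1-u^2))) (u, r)
          ∂(volume.restrict (Set.Ioc (0:ℝ) 1)) := by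
    funext r
    rw [intervalIntegral.integral_of_le zero_le_one]
    rfl
  rw [heq]
  exact hmarg

end WithF

noncomputable def kappa' (f : ℝ → ℝ) (s : ℝ) : ℝ :=
  (2 / Real.pi) * ∫ σ in (0:ℝ)..s, f σ * Real.sqrt (1 - σ ^ 2 / s ^ 2)

theorem main (f : ℝ → ℝ) (hcont : Continuous f) (s₀ : ℝ)
    (hs₀ : 0 < s₀) (hzero : KF f s₀ = 0)
    (hneg : ∀ x ∈ Set.Ioo (0:ℝ) s₀, KF f x < 0)
    (hpos : ∀ x ∈ Set.Ioi s₀, 0 < KF f x)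
    (hmono : MonotoneOn (KF f) (Set.Ioi s₀))
    (htop : Tendsto (KF f) atTop atTop) :
    ∃ ρ : ℝ, 0 < ρ ∧ kappa' f ρ = 0 ∧ (∀ s ∈ Set.Ioo (0:ℝ) ρ, kappa' f s < 0) ∧
      (∀ s ∈ Set.Ioi ρ, 0 < kappa' f s) ∧ MonotoneOn (kappa' f) (Set.Ioi ρ) ∧
      Tendsto (kappa' f) atTop atTop := by
  have hπ : (0:ℝ) < 2/π := div_pos two_pos Real.pi_pos
  -- representation κ(s) = (2/π)·∫₀¹ KF f (su)·u/√(1-u²) du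
  have hkap : ∀ s : ℝ, 0 < s →
      kappa' f s = (2/π) * ∫ u in (0:ℝ)..1, KF f (s*u) * (u / Real.sqrt (1-u^2)) := by
    intro s hs
    rw [kappa']
    congr 1
    rw [← Brep hcont hs]
    have hsub := intervalIntegral.smul_integral_comp_mul_left
      (f := fun σ => f σ * Real.sqrt (1 - σ^2/s^2)) (a := (0:ℝ)) (b := 1) s
    rw [mul_zero, mul_one] at hsub
    rw [← hsub, smul_eq_mul]
    congr 1
    apply intervalIntegral.integral_congr
    intro u _
    have he : (s*u)^2/s^2 = u^2 := by
      field_simp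
    simp only [he]
  -- strict monotonicity on [s₀, ∞)
  have hstrict : ∀ a b : ℝ, s₀ ≤ a → a < b → kappa' f a < kappa' f b := by
    intro a b ha hab
    have ha0 : 0 < a := lt_of_lt_of_le hs₀ ha
    have hb0 : 0 < b := ha0.trans hab
    rw [hkap a ha0, hkap b hb0]
    have hinc := increment hcont ha0 hab.le
    have hIpos : 0 < ∫ r in a..b, ∫ u in (0:ℝ)..1, f (r*u) * (u^2 / Real.sqrt (1-u^2)) := by
      apply intervalIntegral.intervalIntegral_pos_of_pos_on
        (int_I hcont ha0 hab.le) _ hab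
      intro r hrr
      exact Ipos hs₀ hzero hneg hpos hmono hcont (lt_of_le_of_lt ha hrr.1)
    have hBlt : (∫ u in (0:ℝ)..1, KF f (a*u) * (u / Real.sqrt (1-u^2)))
        < ∫ u in (0:ℝ)..1, KF f (b*u) * (u / Real.sqrt (1-u^2)) := by linarith
    exact mul_lt_mul_of_pos_left hBlt hπ
  have hmonoka : ∀ a b : ℝ, s₀ ≤ a → a ≤ b → kappa' f a ≤ kappa' f b := by
    intro a b ha hab
    rcases eq_or_lt_of_le hab with rfl | h
    · exact le_rfl
    · exact (hstrict a b ha h).le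
  -- negativity on (0, s₀]
  have hnegk : ∀ s : ℝ, 0 < s → s ≤ s₀ → kappa' f s < 0 := by
    intro s h1 h2
    rw [hkap s h1]
    have := negB hs₀ hzero hneg hpos hmono hcont h1 h2
    nlinarith
  -- unboundedness
  have hketop : Tendsto (kappa' f) atTop atTop := by
    obtain ⟨M, hM0, hM⟩ := exists_bd (KF_cont hcont) hs₀.le
    have hMl : ∀ x : ℝ, 0 ≤ x → -M ≤ KF f x := by
      intro x hx
      rcases le_or_gt x s₀ with h | h
      · linarith [(abs_le.1 (hM x ⟨hx, h⟩)).1]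
      · linarith [hpos x h]
    set c0 := ∫ u in (0:ℝ)..(3/4:ℝ), u / Real.sqrt (1-u^2) with hc0
    set c2 := ∫ u in (3/4:ℝ)..1, u / Real.sqrt (1-u^2) with hc2
    have hsub2 := int_m.mono_set (uIcc_sub (c := (3/4:ℝ)) (d := 1) (by norm_num) (by norm_num) le_rfl)
    have hc2pos : 0 < c2 := by
      apply intervalIntegral.intervalIntegral_pos_of_pos_on hsub2 _ (by norm_num)
      intro u hu
      exact div_pos (by linarith [hu.1]) (sqrt_pos_of_lt_one (by linarith [hu.1]) hu.2)
    have hlow : ∀ s : ℝ, 2*s₀ ≤ s →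
        (2/π) * (-(M*c0) + KF f (3*s/4) * c2) ≤ kappa' f s := by
      intro s hs2
      have hs0 : 0 < s := by linarith
      rw [hkap s hs0]
      apply mul_le_mul_of_nonneg_left _ hπ.le
      have hsplit := intervalIntegral.integral_add_adjacent_intervals
        ((int_g2 hcont hs0).mono_set
          (uIcc_sub (c := 0) (d := (3/4:ℝ)) le_rfl (by norm_num) (by norm_num)))
        ((int_g2 hcont hs0).mono_set
          (uIcc_sub (c := (3/4:ℝ)) (d := 1) (by norm_num) (by norm_num) le_rfl))
      rw [← hsplit]
      have hp1 : -(M*c0) ≤ ∫ u in (0:ℝ)..(3/4:ℝ), KF f (s*u) * (u/Real.sqrt (1-u^2)) := by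
        have he : ∫ u in (0:ℝ)..(3/4:ℝ), -M * (u/Real.sqrt (1-u^2)) = -(M*c0) := by
          rw [intervalIntegral.integral_const_mul, hc0, neg_mul]
        rw [← he]
        apply intervalIntegral.integral_mono_on (by norm_num)
          ((int_m.const_mul (-M)).mono_set (uIcc_sub le_rfl (by norm_num) (by norm_num)))
          ((int_g2 hcont hs0).mono_set (uIcc_sub le_rfl (by norm_num) (by norm_num)))
        intro u hu
        exact mul_le_mul_of_nonneg_right (hMl _ (mul_nonneg hs0.le hu.1)) (m_nonneg hu.1)
      have hp2 : KF f (3*s/4) * c2 ≤ ∫ u in (3/4:ℝ)..1, KF f (s*u) * (u/Real.sqrt (1-u^2)) := by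
        have he : ∫ u in (3/4:ℝ)..1, KF f (3*s/4) * (u/Real.sqrt (1-u^2))
            = KF f (3*s/4) * c2 := by
          rw [intervalIntegral.integral_const_mul, hc2]
        rw [← he]
        apply intervalIntegral.integral_mono_on (by norm_num)
          ((int_m.const_mul _).mono_set (uIcc_sub (by norm_num) (by norm_num) le_rfl))
          ((int_g2 hcont hs0).mono_set (uIcc_sub (by norm_num) (by norm_num) le_rfl))
        intro u hu
        have h34 : s₀ < 3*s/4 := by linarith
        have hsu : 3*s/4 ≤ s*u := by nlinarith [hu.1]
        have h2 : KF f (3*s/4) ≤ KF f (s*u) :=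
          hmono (Set.mem_Ioi.2 h34) (Set.mem_Ioi.2 (lt_of_lt_of_le h34 hsu)) hsu
        exact mul_le_mul_of_nonneg_right h2 (m_nonneg (by linarith [hu.1]))
      linarith
    have hlim : Tendsto (fun s : ℝ => (2/π) * (-(M*c0) + KF f (3*s/4) * c2)) atTop atTop := by
      apply Tendsto.const_mul_atTop hπ
      apply tendsto_atTop_add_const_left
      apply Tendsto.atTop_mul_const hc2pos
      have hg : Tendsto (fun s : ℝ => 3*s/4) atTop atTop :=
        Tendsto.atTop_div_const (by norm_num)
          (tendsto_id.const_mul_atTop (by norm_num : (0:ℝ) < 3))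
      exact htop.comp hg
    exact tendsto_atTop_mono' atTop (eventually_atTop.2 ⟨2*s₀, fun s hs => hlow s hs⟩) hlim
  -- choose s₂ with positive value
  obtain ⟨s₂, hs₂gt, hs₂pos⟩ : ∃ s₂, s₀ < s₂ ∧ 0 < kappa' f s₂ := by
    obtain ⟨x, hx1, hx2⟩ := ((eventually_gt_atTop s₀).and (hketop.eventually_gt_atTop 0)).exists
    exact ⟨x, hx1, hx2⟩
  -- continuity on Icc s₀ s₂ via a Lipschitz bound
  have hcontOn : ContinuousOn (kappa' f) (Set.Icc s₀ s₂) := by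
    obtain ⟨C, hC0, hC⟩ := exists_bd hcont (le_of_lt (hs₀.trans hs₂gt))
    set W := ∫ u in (0:ℝ)..1, u^2 / Real.sqrt (1-u^2) with hW
    have hW0 : 0 ≤ W :=
      intervalIntegral.integral_nonneg zero_le_one (fun u _ => wg_nonneg u)
    set K := (2/π) * (C*W) with hK
    have hK0 : 0 ≤ K := by positivity
    have hbd : ∀ a b : ℝ, s₀ ≤ a → a ≤ b → b ≤ s₂ →
        kappa' f b - kappa' f a ≤ K * (b-a) := by
      intro a b ha hab hb
      have ha0 : 0 < a := lt_of_lt_of_le hs₀ ha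
      rw [hkap a ha0, hkap b (lt_of_lt_of_le ha0 hab)]
      have hinc := increment hcont ha0 hab
      have hIle : (∫ r in a..b, ∫ u in (0:ℝ)..1, f (r*u) * (u^2/Real.sqrt (1-u^2)))
          ≤ (b-a) * (C*W) := by
        have h1 : ∀ r ∈ Set.Icc a b,
            (∫ u in (0:ℝ)..1, f (r*u) * (u^2/Real.sqrt (1-u^2))) ≤ C*W := by
          intro r hrr
          have hr0 : 0 < r := lt_of_lt_of_le ha0 hrr.1
          have h2 : ∀ u ∈ Set.Icc (0:ℝ) 1,
              f (r*u) * (u^2/Real.sqrt (1-u^2)) ≤ C * (u^2/Real.sqrt (1-u^2)) := by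
            intro u hu
            have harg : r*u ∈ Set.Icc (0:ℝ) s₂ :=
              ⟨mul_nonneg hr0.le hu.1, by nlinarith [hrr.2, hu.2, hb, hr0.le, hu.1]⟩
            have habs : f (r*u) ≤ C := (le_abs_self _).trans (hC _ harg)
            exact mul_le_mul_of_nonneg_right habs (wg_nonneg u)
          calc (∫ u in (0:ℝ)..1, f (r*u) * (u^2/Real.sqrt (1-u^2)))
              ≤ ∫ u in (0:ℝ)..1, C * (u^2/Real.sqrt (1-u^2)) :=
                intervalIntegral.integral_mono_on zero_le_one (int_g3 hcont hr0)
                  (int_wg.const_mul C) h2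
            _ = C * W := by rw [intervalIntegral.integral_const_mul, hW]
        calc (∫ r in a..b, ∫ u in (0:ℝ)..1, f (r*u) * (u^2/Real.sqrt (1-u^2)))
            ≤ ∫ _r in a..b, C*W :=
              intervalIntegral.integral_mono_on hab (int_I hcont ha0 hab)
                intervalIntegrable_const h1
          _ = (b-a) * (C*W) := by rw [intervalIntegral.integral_const, smul_eq_mul]
      have hBle : (∫ u in (0:ℝ)..1, KF f (b*u) * (u / Real.sqrt (1-u^2)))
          - (∫ u in (0:ℝ)..1, KF f (a*u) * (u / Real.sqrt (1-u^2))) ≤ (b-a)*(C*W) := by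
        rw [hinc]; exact hIle
      have hmul := mul_le_mul_of_nonneg_left hBle hπ.le
      rw [hK]
      nlinarith [hmul]
    apply LipschitzOnWith.continuousOn (K := Real.toNNReal K)
    rw [lipschitzOnWith_iff_dist_le_mul]
    intro x hx y hy
    rw [Real.dist_eq, Real.dist_eq, Real.coe_toNNReal K hK0]
    rcases le_total x y with h | h
    · rw [abs_of_nonpos (by linarith [hmonoka x y hx.1 h] : kappa' f x - kappa' f y ≤ 0),
        abs_of_nonpos (by linarith : x - y ≤ 0)]
      have := hbd x y hx.1 h hy.2
      linarith
    · rw [abs_of_nonneg (by linarith [hmonoka y x hy.1 h] : 0 ≤ kappa' f x - kappa' f y),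
        abs_of_nonneg (by linarith : 0 ≤ x - y)]
      have := hbd y x hy.1 h hx.2
      linarith
  -- IVT
  have h0mem : (0:ℝ) ∈ Set.Ioo (kappa' f s₀) (kappa' f s₂) :=
    ⟨hnegk s₀ hs₀ le_rfl, hs₂pos⟩
  obtain ⟨ρ, hρmem, hρ⟩ := intermediate_value_Ioo (le_of_lt hs₂gt) hcontOn h0mem
  refine ⟨ρ, hs₀.trans hρmem.1, hρ, ?_, ?_, ?_, hketop⟩
  · intro s hs
    rcases le_or_gt s s₀ with h | h
    · exact hnegk s hs.1 h
    · have := hstrict s ρ h.le hs.2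
      linarith [hρ ▸ this]
  · intro s hs
    have := hstrict ρ s hρmem.1.le hs
    linarith [hρ ▸ this]
  · intro x hx y hy hxy
    exact hmonoka x y (le_of_lt (hρmem.1.trans hx)) hxy

end KappaAux


/-- `κ` satisfies condition (L2): there exists `ρ > 0` with `κ(ρ) = 0`,
`κ` negative on `(0, ρ)` and positive, nondecreasing, unbounded on `(ρ, ∞)`. -/
theorem kappa_condL2 (f : ℝ → ℝ) (hflip : LocallyLipschitz f) (hfe : ∀ s : ℝ, f (-s) = f s)
    (s₀ : ℝ) (hF : CondL2 (fun s => ∫ σ in (0:ℝ)..s, f σ) s₀) :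
    ∃ ρ : ℝ, CondL2 (kappa f) ρ := by
  obtain ⟨hs₀, hzero, hneg, hpos, hmono, htop⟩ := hF
  obtain ⟨ρ, h1, h2, h3, h4, h5, h6⟩ :=
    KappaAux.main f hflip.continuous s₀ hs₀ hzero hneg hpos hmono htop
  exact ⟨ρ, h1, h2, h3, h4, h5, h6⟩
end
end

section
/- For every s ∈ (0, s₀) one has ∫_0^s f(σ) √(1 − σ²/s²) dσ < 0; equivalently κ(s) < 0 on (0, s₀). -/
open Real Set Filter MeasureTheory
open scoped RealInnerProductSpace

noncomputable section

/-- `∫₀ˢ f(σ) √(1 - σ²/s²) dσ < 0` on `(0, s₀)`; equivalently `κ < 0` there. -/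
private theorem aux_weighted_integral_neg (f : ℝ → ℝ) (hf : Continuous f) (s₀ : ℝ) (hs₀ : 0 < s₀)
    (hF : ∀ s ∈ Set.Ioo (0:ℝ) s₀, (∫ σ in (0:ℝ)..s, f σ) < 0) :
    ∀ s ∈ Set.Ioo (0:ℝ) s₀,
      (∫ σ in (0:ℝ)..s, f σ * Real.sqrt (1 - σ ^ 2 / s ^ 2)) < 0 := by
  intro s hs
  obtain ⟨hs0, hss⟩ := hs
  -- bounded continuous modification of f
  set fc : ℝ → ℝ := fun x => f (max 0 (min x s)) with hfc_def
  have hfc_cont : Continuous fc :=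
    hf.comp (continuous_const.max (continuous_id.min continuous_const))
  have hfc_eq : ∀ x ∈ Icc (0:ℝ) s, fc x = f x := by
    intro x hx
    simp only [hfc_def]
    rw [min_eq_left hx.2, max_eq_right hx.1]
  obtain ⟨M, hM⟩ : ∃ M, ∀ x, |fc x| ≤ M := by
    obtain ⟨M, hM⟩ := (isCompact_Icc (a := (0:ℝ)) (b := s)).exists_bound_of_continuousOn
      hf.continuousOn
    exact ⟨M, fun x => hM _ ⟨le_max_left _ _, max_le hs0.le (min_le_right _ _)⟩⟩
  have hMnn : 0 ≤ M := le_trans (abs_nonneg _) (hM 0)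
  -- the kernel
  set S : Set (ℝ × ℝ) := {p | p.1 < s * Real.sin p.2} with hS_def
  have hSm : MeasurableSet S :=
    measurableSet_lt measurable_fst
      ((continuous_const.mul (Real.continuous_sin.comp continuous_snd)).measurable)
  set K : ℝ → ℝ → ℝ := fun σ θ => S.indicator (fun p => fc p.1 * Real.sin p.2) (σ, θ)
    with hK_def
  set μ := volume.restrict (Ioc (0:ℝ) s) with hμ
  set ν := volume.restrict (Ioc (0:ℝ) (π/2)) with hν
  haveI : IsFiniteMeasure μ := by
    constructor
    rw [hμ, Measure.restrict_apply_univ]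
    exact measure_Ioc_lt_top
  haveI : IsFiniteMeasure ν := by
    constructor
    rw [hν, Measure.restrict_apply_univ]
    exact measure_Ioc_lt_top
  have hKint : Integrable (Function.uncurry K) (μ.prod ν) := by
    have huncurry : Function.uncurry K = S.indicator (fun p => fc p.1 * Real.sin p.2) := by
      funext p; rfl
    refine Integrable.mono' (integrable_const M) ?_ ?_
    · rw [huncurry]
      exact (((hfc_cont.comp continuous_fst).mul
        (Real.continuous_sin.comp continuous_snd)).stronglyMeasurable.indicator
        hSm).aestronglyMeasurable
    · refine Filter.Eventually.of_forall fun p => ?_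
      rw [huncurry]
      calc ‖S.indicator (fun p => fc p.1 * Real.sin p.2) p‖
          ≤ ‖fc p.1 * Real.sin p.2‖ := norm_indicator_le_norm_self _ _
        _ = |fc p.1| * |Real.sin p.2| := abs_mul _ _
        _ ≤ M * 1 := mul_le_mul (hM _) (Real.abs_sin_le_one _) (abs_nonneg _) hMnn
        _ = M := mul_one M
  -- inner integral in θ
  have inner1 : ∀ σ ∈ Ioc (0:ℝ) s,
      (∫ θ, K σ θ ∂ν) = fc σ * Real.sqrt (1 - σ ^ 2 / s ^ 2) := by
    intro σ hσ
    have hdiv01 : σ / s ∈ Icc (-1:ℝ) 1 := by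
      constructor
      · linarith [div_nonneg hσ.1.le hs0.le]
      · rw [div_le_one hs0]; exact hσ.2
    have h1 : (fun θ => K σ θ)
        = Set.indicator {θ : ℝ | σ < s * Real.sin θ} (fun θ => fc σ * Real.sin θ) := by
      funext θ; rfl
    have hsetm : MeasurableSet {θ : ℝ | σ < s * Real.sin θ} :=
      measurableSet_lt measurable_const (continuous_const.mul Real.continuous_sin).measurable
    rw [h1, hν, MeasureTheory.setIntegral_indicator hsetm]
    have hseteq : Ioc (0:ℝ) (π/2) ∩ {θ : ℝ | σ < s * Real.sin θ}
        = Ioc (Real.arcsin (σ / s)) (π/2) := by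
      ext θ
      simp only [mem_inter_iff, mem_Ioc, mem_setOf_eq]
      constructor
      · rintro ⟨⟨h0, hπ⟩, hlt⟩
        refine ⟨?_, hπ⟩
        rw [Real.arcsin_lt_iff_lt_sin hdiv01 ⟨by linarith [Real.pi_div_two_pos], hπ⟩]
        rw [div_lt_iff₀ hs0]
        linarith [hlt]
      · rintro ⟨harc, hπ⟩
        have harcpos : 0 < Real.arcsin (σ / s) :=
          Real.arcsin_pos.2 (div_pos hσ.1 hs0)
        refine ⟨⟨harcpos.trans harc, hπ⟩, ?_⟩
        have := (Real.arcsin_lt_iff_lt_sin hdiv01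
          ⟨by linarith [Real.pi_div_two_pos, harcpos,
            Real.neg_pi_div_two_le_arcsin (σ / s)], hπ⟩).1 harc
        rw [div_lt_iff₀ hs0] at this
        linarith [this]
    rw [hseteq, ← intervalIntegral.integral_of_le (Real.arcsin_le_pi_div_two _),
      intervalIntegral.integral_const_mul, integral_sin, Real.cos_pi_div_two,
      Real.cos_arcsin, sub_zero, div_pow]
  -- inner integral in σ
  have inner2 : ∀ θ ∈ Ioc (0:ℝ) (π/2),
      (∫ σ, K σ θ ∂μ) = (∫ σ in (0:ℝ)..(s * Real.sin θ), f σ) * Real.sin θ := by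
    intro θ hθ
    have hsinpos : 0 < Real.sin θ :=
      Real.sin_pos_of_pos_of_lt_pi hθ.1 (lt_of_le_of_lt hθ.2 (by linarith [Real.pi_pos]))
    have hcle : s * Real.sin θ ≤ s := by
      nlinarith [Real.sin_le_one θ]
    have hcpos : 0 < s * Real.sin θ := mul_pos hs0 hsinpos
    have h1 : (fun σ => K σ θ)
        = Set.indicator (Iio (s * Real.sin θ)) (fun σ => fc σ * Real.sin θ) := by
      funext σ; rfl
    rw [h1, hμ, MeasureTheory.setIntegral_indicator measurableSet_Iio]
    have hseteq : Ioc (0:ℝ) s ∩ Iio (s * Real.sin θ) = Ioo 0 (s * Real.sin θ) := by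
      ext σ
      simp only [mem_inter_iff, mem_Ioc, mem_Iio, mem_Ioo]
      constructor
      · rintro ⟨⟨h1, h2⟩, h3⟩; exact ⟨h1, h3⟩
      · rintro ⟨h1, h3⟩; exact ⟨⟨h1, le_trans h3.le hcle⟩, h3⟩
    rw [hseteq, ← MeasureTheory.integral_Ioc_eq_integral_Ioo,
      ← intervalIntegral.integral_of_le hcpos.le, intervalIntegral.integral_mul_const]
    congr 1
    refine intervalIntegral.integral_congr fun x hx => ?_
    rw [uIcc_of_le hcpos.le] at hx
    exact hfc_eq x ⟨hx.1, le_trans hx.2 hcle⟩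
  -- assemble
  have step1 : (∫ σ in (0:ℝ)..s, f σ * Real.sqrt (1 - σ ^ 2 / s ^ 2))
      = ∫ σ, (∫ θ, K σ θ ∂ν) ∂μ := by
    rw [intervalIntegral.integral_of_le hs0.le, hμ]
    refine (MeasureTheory.setIntegral_congr_fun measurableSet_Ioc fun σ hσ => ?_).symm
    rw [inner1 σ hσ, hfc_eq σ ⟨hσ.1.le, hσ.2⟩]
  have step2 : (∫ θ, (∫ σ, K σ θ ∂μ) ∂ν)
      = ∫ θ in (0:ℝ)..(π/2), (∫ σ in (0:ℝ)..(s * Real.sin θ), f σ) * Real.sin θ := by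
    rw [intervalIntegral.integral_of_le (by positivity : (0:ℝ) ≤ π/2), hν]
    exact MeasureTheory.setIntegral_congr_fun measurableSet_Ioc fun θ hθ => inner2 θ hθ
  rw [step1, MeasureTheory.integral_integral_swap hKint, step2]
  -- strict negativity
  have hFcont : Continuous fun x : ℝ => ∫ σ in (0:ℝ)..x, f σ :=
    intervalIntegral.continuous_primitive (fun a b => hf.intervalIntegrable a b) 0
  have hGcont : Continuous fun θ : ℝ => (∫ σ in (0:ℝ)..(s * Real.sin θ), f σ) * Real.sin θ :=
    (hFcont.comp (continuous_const.mul Real.continuous_sin)).mul Real.continuous_sin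
  have hpos : 0 < ∫ θ in (0:ℝ)..(π/2),
      -((∫ σ in (0:ℝ)..(s * Real.sin θ), f σ) * Real.sin θ) := by
    refine intervalIntegral.intervalIntegral_pos_of_pos_on
      (hGcont.neg.intervalIntegrable _ _) (fun θ hθ => ?_) (by positivity)
    have hsinpos : 0 < Real.sin θ :=
      Real.sin_pos_of_pos_of_lt_pi hθ.1 (lt_trans hθ.2 (by linarith [Real.pi_pos]))
    have hmem : s * Real.sin θ ∈ Ioo (0:ℝ) s₀ := by
      constructor
      · exact mul_pos hs0 hsinpos
      · nlinarith [Real.sin_le_one θ]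
    have := hF _ hmem
    rw [neg_mul_eq_neg_mul]
    exact mul_pos (by linarith) hsinpos
  rw [intervalIntegral.integral_neg] at hpos
  linarith


theorem kappa_neg_on_Ioo (f : ℝ → ℝ) (hf : Continuous f) (s₀ : ℝ) (hs₀ : 0 < s₀)
    (hF : ∀ s ∈ Set.Ioo (0:ℝ) s₀, (∫ σ in (0:ℝ)..s, f σ) < 0) :
    ∀ s ∈ Set.Ioo (0:ℝ) s₀,
      (∫ σ in (0:ℝ)..s, f σ * Real.sqrt (1 - σ ^ 2 / s ^ 2)) < 0 ∧ kappa f s < 0 := by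
  intro s hs
  have h := aux_weighted_integral_neg f hf s₀ hs₀ hF s hs
  exact ⟨h, mul_neg_of_pos_of_neg (div_pos two_pos Real.pi_pos) h⟩
end
end

section
/- For all s > t > s₀ one has ∫_0^s f(σ) √(1 − σ²/s²) dσ > ∫_0^t f(σ) √(1 − σ²/t²) dσ; that is, κ is strictly increasing on (s₀, ∞). -/
open Real Set Filter MeasureTheory
open scoped RealInnerProductSpace

noncomputable section

set_option maxHeartbeats 1000000

namespace KappaProof
variable {f : ℝ → ℝ}


variable {f : ℝ → ℝ}

lemma F_hasDerivAt (hf : Continuous f) (x : ℝ) :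
    HasDerivAt (fun s => ∫ σ in (0:ℝ)..s, f σ) (f x) x :=
  (hf.integral_hasStrictDerivAt 0 x).hasDerivAt

lemma F_cont (hf : Continuous f) : Continuous (fun s => ∫ σ in (0:ℝ)..s, f σ) :=
  continuous_iff_continuousAt.2 fun x => (F_hasDerivAt hf x).continuousAt

lemma comp_hasDerivAt (hf : Continuous f) (r θ : ℝ) :
    HasDerivAt (fun θ => ∫ σ in (0:ℝ)..(r * Real.sin θ), f σ)
      (f (r * Real.sin θ) * (r * Real.cos θ)) θ := by
  have h1 := (F_hasDerivAt hf (r * Real.sin θ)).comp θ ((Real.hasDerivAt_sin θ).const_mul r)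
  exact h1

lemma keyEq (hf : Continuous f) {r : ℝ} (hr : 0 < r) :
    (∫ σ in (0:ℝ)..r, f σ * Real.sqrt (1 - σ ^ 2 / r ^ 2)) =
      ∫ θ in (0:ℝ)..(π / 2), (∫ σ in (0:ℝ)..(r * Real.sin θ), f σ) * Real.sin θ := by
  have hrne : r ≠ 0 := hr.ne'
  have hpi2 : (0:ℝ) ≤ π / 2 := by positivity
  have hg : ∀ θ ∈ uIcc (0:ℝ) (π/2), HasDerivAt (fun θ => r * Real.sin θ) (r * Real.cos θ) θ :=
    fun θ _ => (Real.hasDerivAt_sin θ).const_mul r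
  have hgc : ContinuousOn (fun θ => r * Real.cos θ) (uIcc (0:ℝ) (π/2)) := by fun_prop
  have hhc : Continuous (fun σ : ℝ => f σ * Real.sqrt (1 - σ ^ 2 / r ^ 2)) :=
    hf.mul (continuous_const.sub ((continuous_pow 2).div_const _)).sqrt
  have hsub := intervalIntegral.integral_comp_smul_deriv hg hgc hhc
  rw [Real.sin_zero, Real.sin_pi_div_two, mul_zero, mul_one] at hsub
  rw [← hsub]
  have hco : Set.EqOn
      (fun θ => (r * Real.cos θ) •
        ((fun σ => f σ * Real.sqrt (1 - σ^2/r^2)) ∘ (fun θ => r * Real.sin θ)) θ)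
      (fun θ => f (r * Real.sin θ) * (r * Real.cos θ) * Real.cos θ)
      (uIcc (0:ℝ) (π/2)) := by
    intro θ hθ
    rw [uIcc_of_le hpi2] at hθ
    have hcos : 0 ≤ Real.cos θ := Real.cos_nonneg_of_mem_Icc ⟨by linarith [hθ.1], hθ.2⟩
    have h1 : 1 - (r * Real.sin θ)^2 / r^2 = (Real.cos θ)^2 := by
      have := Real.sin_sq_add_cos_sq θ
      field_simp [mul_pow]
      linarith
    simp only [Function.comp_apply, smul_eq_mul, h1, Real.sqrt_sq hcos]
    ring
  rw [intervalIntegral.integral_congr hco]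
  have hFc := F_cont (f := f) hf
  have hcF : Continuous (fun θ => (∫ σ in (0:ℝ)..(r * Real.sin θ), f σ)) :=
    hFc.comp (continuous_const.mul Real.continuous_sin)
  have hu : ∀ θ ∈ uIcc (0:ℝ) (π/2),
      HasDerivAt (fun θ => ∫ σ in (0:ℝ)..(r * Real.sin θ), f σ)
        (f (r * Real.sin θ) * (r * Real.cos θ)) θ := fun θ _ => comp_hasDerivAt hf r θ
  have hv : ∀ θ ∈ uIcc (0:ℝ) (π/2), HasDerivAt Real.cos (-Real.sin θ) θ :=
    fun θ _ => Real.hasDerivAt_cos θ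
  have hu'int : IntervalIntegrable (fun θ => f (r * Real.sin θ) * (r * Real.cos θ))
      volume 0 (π/2) := (Continuous.intervalIntegrable (by fun_prop) _ _)
  have hv'int : IntervalIntegrable (fun θ => -Real.sin θ) volume 0 (π/2) :=
    (Continuous.intervalIntegrable (by fun_prop) _ _)
  have hibp := intervalIntegral.integral_deriv_mul_eq_sub hu hv hu'int hv'int
  rw [Real.cos_pi_div_two, Real.cos_zero] at hibp
  simp only [Real.sin_zero, mul_zero, intervalIntegral.integral_same, zero_mul, mul_one,
    sub_zero, mul_zero, zero_sub, neg_eq_zero] at hibp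
  have hint1 : IntervalIntegrable
      (fun θ => f (r*Real.sin θ) * (r*Real.cos θ) * Real.cos θ) volume 0 (π/2) :=
    (Continuous.intervalIntegrable (by fun_prop) _ _)
  have hint2 : IntervalIntegrable
      (fun θ => (∫ σ in (0:ℝ)..(r*Real.sin θ), f σ) * (-Real.sin θ)) volume 0 (π/2) :=
    (Continuous.intervalIntegrable (by fun_prop) _ _)
  rw [intervalIntegral.integral_add hint1 hint2] at hibp
  have hB : (∫ θ in (0:ℝ)..(π/2), (∫ σ in (0:ℝ)..(r*Real.sin θ), f σ) * (-Real.sin θ))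
      = -∫ θ in (0:ℝ)..(π/2), (∫ σ in (0:ℝ)..(r*Real.sin θ), f σ) * Real.sin θ := by
    rw [← intervalIntegral.integral_neg]
    apply intervalIntegral.integral_congr
    intro θ _
    ring
  rw [hB] at hibp
  linarith

lemma ker_contOn (hf : Continuous f) {s₀ r : ℝ} (h0 : 0 < s₀) (hr : s₀ < r) :
    ContinuousOn (fun σ => (∫ τ in (0:ℝ)..σ, f τ) * (σ / (r * Real.sqrt (r^2 - σ^2))))
      (Set.Icc 0 s₀) := by
  apply ContinuousOn.mul (F_cont hf).continuousOn
  apply ContinuousOn.div continuousOn_id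
  · exact (continuous_const.mul (continuous_const.sub (continuous_pow 2)).sqrt).continuousOn
  · intro σ hσ
    have h1 : 0 < r^2 - σ^2 := by nlinarith [hσ.1, hσ.2]
    have h2 : 0 < Real.sqrt (r^2 - σ^2) := Real.sqrt_pos.2 h1
    have hrpos : 0 < r := h0.trans hr
    positivity

lemma Neq (hf : Continuous f) {s₀ r : ℝ} (h0 : 0 < s₀) (hr : s₀ < r) :
    (∫ θ in (0:ℝ)..Real.arcsin (s₀ / r),
        (∫ σ in (0:ℝ)..(r * Real.sin θ), f σ) * Real.sin θ)
      = ∫ σ in (0:ℝ)..s₀,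
          (∫ τ in (0:ℝ)..σ, f τ) * (σ / (r * Real.sqrt (r^2 - σ^2))) := by
  have hrpos : 0 < r := h0.trans hr
  have hx0 : 0 ≤ s₀ / r := by positivity
  have hx1 : s₀ / r < 1 := (div_lt_one hrpos).2 hr
  have hθr0 : 0 < Real.arcsin (s₀ / r) := Real.arcsin_pos.2 (by positivity)
  have hθrlt : Real.arcsin (s₀ / r) < π/2 := Real.arcsin_lt_pi_div_two.2 hx1
  have hsinθr : Real.sin (Real.arcsin (s₀ / r)) = s₀ / r := Real.sin_arcsin (by linarith) hx1.le
  have hg : ∀ θ ∈ uIcc (0:ℝ) (Real.arcsin (s₀ / r)),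
      HasDerivAt (fun θ => r * Real.sin θ) (r * Real.cos θ) θ :=
    fun θ _ => (Real.hasDerivAt_sin θ).const_mul r
  have himg : (fun θ => r * Real.sin θ) '' uIcc (0:ℝ) (Real.arcsin (s₀ / r)) ⊆ Set.Icc 0 s₀ := by
    rintro x ⟨θ, hθ, rfl⟩
    rw [uIcc_of_le hθr0.le] at hθ
    have hπ := Real.pi_pos
    have h1 : 0 ≤ Real.sin θ :=
      Real.sin_nonneg_of_nonneg_of_le_pi hθ.1 (by linarith [hθ.2])
    have h2 : Real.sin θ ≤ s₀ / r := by
      rw [← hsinθr]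
      rcases eq_or_lt_of_le hθ.2 with h | h
      · rw [h]
      · exact (Real.strictMonoOn_sin ⟨by linarith [hθ.1], by linarith [hθ.2]⟩
          ⟨by linarith [hθr0], hθrlt.le⟩ h).le
    refine ⟨by positivity, ?_⟩
    calc r * Real.sin θ ≤ r * (s₀ / r) := by nlinarith
      _ = s₀ := by field_simp
  have hsub := intervalIntegral.integral_comp_smul_deriv' hg (by fun_prop)
      ((ker_contOn hf h0 hr).mono himg)
  rw [Real.sin_zero, mul_zero, hsinθr, show r * (s₀/r) = s₀ by field_simp] at hsub
  rw [← hsub]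
  apply intervalIntegral.integral_congr
  intro θ hθ
  rw [uIcc_of_le hθr0.le] at hθ
  have hπ := Real.pi_pos
  have hcos : 0 < Real.cos θ :=
    Real.cos_pos_of_mem_Ioo ⟨by linarith [hθ.1], by linarith [hθ.2, hθrlt]⟩
  have hsq : Real.sqrt (r^2 - (r * Real.sin θ)^2) = r * Real.cos θ := by
    have h1 : r^2 - (r*Real.sin θ)^2 = (r * Real.cos θ)^2 := by
      have := Real.sin_sq_add_cos_sq θ; nlinarith
    rw [h1, Real.sqrt_sq (by positivity)]
  simp only [Function.comp_apply, smul_eq_mul, hsq]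
  field_simp

lemma main_ineq (hf : Continuous f) {s₀ : ℝ} (hs₀ : 0 < s₀)
    (hFs₀ : (∫ σ in (0:ℝ)..s₀, f σ) = 0)
    (hFneg : ∀ u ∈ Set.Ioo (0:ℝ) s₀, (∫ σ in (0:ℝ)..u, f σ) < 0)
    (hFpos : ∀ u ∈ Set.Ioi s₀, 0 < (∫ σ in (0:ℝ)..u, f σ))
    (hFmono : MonotoneOn (fun u => ∫ σ in (0:ℝ)..u, f σ) (Set.Ioi s₀))
    {s t : ℝ} (hst : s₀ < t) (hts : t < s) :
    (∫ σ in (0:ℝ)..t, f σ * Real.sqrt (1 - σ ^ 2 / t ^ 2)) <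
      ∫ σ in (0:ℝ)..s, f σ * Real.sqrt (1 - σ ^ 2 / s ^ 2) := by
  have ht0 : 0 < t := hs₀.trans hst
  have hs0 : 0 < s := ht0.trans hts
  have hπ := Real.pi_pos
  rw [keyEq hf ht0, keyEq hf hs0]
  have hFc := F_cont (f := f) hf
  -- integrability of the θ-integrands
  have hi : ∀ (r a b : ℝ), IntervalIntegrable
      (fun θ => (∫ σ in (0:ℝ)..(r * Real.sin θ), f σ) * Real.sin θ) volume a b := by
    intro r a b
    exact Continuous.intervalIntegrable
      ((hFc.comp (continuous_const.mul Real.continuous_sin)).mul Real.continuous_sin) a b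
  -- arcsin facts
  have hxt0 : 0 < s₀ / t := by positivity
  have hxs0 : 0 < s₀ / s := by positivity
  have hxt1 : s₀ / t < 1 := (div_lt_one ht0).2 hst
  have hxs1 : s₀ / s < 1 := (div_lt_one hs0).2 (hst.trans hts)
  have hθt0 : 0 < Real.arcsin (s₀ / t) := Real.arcsin_pos.2 hxt0
  have hθs0 : 0 < Real.arcsin (s₀ / s) := Real.arcsin_pos.2 hxs0
  have hθtlt : Real.arcsin (s₀ / t) < π / 2 := Real.arcsin_lt_pi_div_two.2 hxt1
  have hθslt : Real.arcsin (s₀ / s) < π / 2 := Real.arcsin_lt_pi_div_two.2 hxs1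
  have hsinθt : Real.sin (Real.arcsin (s₀ / t)) = s₀ / t := Real.sin_arcsin (by linarith) hxt1.le
  have hsinθs : Real.sin (Real.arcsin (s₀ / s)) = s₀ / s := Real.sin_arcsin (by linarith) hxs1.le
  have hxx : s₀ / s < s₀ / t := by
    rw [div_lt_div_iff₀ hs0 ht0]; nlinarith
  have hθst : Real.arcsin (s₀ / s) < Real.arcsin (s₀ / t) :=
    Real.strictMonoOn_arcsin ⟨by linarith, hxs1.le⟩ ⟨by linarith, hxt1.le⟩ hxx
  -- splits
  have hsplitT : (∫ θ in (0:ℝ)..(π/2), (∫ σ in (0:ℝ)..(t * Real.sin θ), f σ) * Real.sin θ)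
      = (∫ θ in (0:ℝ)..Real.arcsin (s₀ / t), (∫ σ in (0:ℝ)..(t * Real.sin θ), f σ) * Real.sin θ)
        + ∫ θ in Real.arcsin (s₀ / t)..(π/2),
            (∫ σ in (0:ℝ)..(t * Real.sin θ), f σ) * Real.sin θ :=
    (intervalIntegral.integral_add_adjacent_intervals (hi t _ _) (hi t _ _)).symm
  have hsplitS : (∫ θ in (0:ℝ)..(π/2), (∫ σ in (0:ℝ)..(s * Real.sin θ), f σ) * Real.sin θ)
      = (∫ θ in (0:ℝ)..Real.arcsin (s₀ / s), (∫ σ in (0:ℝ)..(s * Real.sin θ), f σ) * Real.sin θ)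
        + ∫ θ in Real.arcsin (s₀ / s)..(π/2),
            (∫ σ in (0:ℝ)..(s * Real.sin θ), f σ) * Real.sin θ :=
    (intervalIntegral.integral_add_adjacent_intervals (hi s _ _) (hi s _ _)).symm
  have hNt := Neq hf hs₀ hst
  have hNs := Neq hf hs₀ (hst.trans hts)
  -- strict comparison of the negative parts
  have hMlt : (∫ σ in (0:ℝ)..s₀, (∫ τ in (0:ℝ)..σ, f τ) * (σ / (t * Real.sqrt (t^2 - σ^2))))
      < ∫ σ in (0:ℝ)..s₀, (∫ τ in (0:ℝ)..σ, f τ) * (σ / (s * Real.sqrt (s^2 - σ^2))) := by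
    apply intervalIntegral.integral_lt_integral_of_continuousOn_of_le_of_exists_lt hs₀
      (ker_contOn hf hs₀ hst) (ker_contOn hf hs₀ (hst.trans hts))
    · intro σ hσ
      have hF0 : (∫ τ in (0:ℝ)..σ, f τ) ≤ 0 := by
        rcases eq_or_lt_of_le hσ.2 with h | h
        · rw [h, hFs₀]
        · exact (hFneg σ ⟨hσ.1, h⟩).le
      have h1 : 0 < t * Real.sqrt (t^2 - σ^2) := by
        have h2 : 0 < t^2 - σ^2 := by nlinarith [hσ.1, hσ.2]
        have := Real.sqrt_pos.2 h2; positivity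
      have h2 : t * Real.sqrt (t^2 - σ^2) ≤ s * Real.sqrt (s^2 - σ^2) := by
        have h3 : Real.sqrt (t^2 - σ^2) ≤ Real.sqrt (s^2 - σ^2) :=
          Real.sqrt_le_sqrt (by nlinarith)
        nlinarith [Real.sqrt_nonneg (t^2 - σ^2)]
      have hker : σ / (s * Real.sqrt (s^2 - σ^2)) ≤ σ / (t * Real.sqrt (t^2 - σ^2)) := by
        gcongr
        exact hσ.1.le
      exact mul_le_mul_of_nonpos_left hker hF0
    · refine ⟨s₀ / 2, ⟨by positivity, by linarith⟩, ?_⟩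
      have hFn := hFneg (s₀/2) ⟨by positivity, by linarith⟩
      have h1 : 0 < t * Real.sqrt (t^2 - (s₀/2)^2) := by
        have h2 : 0 < t^2 - (s₀/2)^2 := by nlinarith
        have := Real.sqrt_pos.2 h2; positivity
      have h2 : t * Real.sqrt (t^2 - (s₀/2)^2) < s * Real.sqrt (s^2 - (s₀/2)^2) := by
        have h3 : Real.sqrt (t^2 - (s₀/2)^2) < Real.sqrt (s^2 - (s₀/2)^2) :=
          Real.sqrt_lt_sqrt (by nlinarith) (by nlinarith)
        exact mul_lt_mul'' hts h3 ht0.le (Real.sqrt_nonneg _)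
      have hker : (s₀/2) / (s * Real.sqrt (s^2 - (s₀/2)^2)) < (s₀/2) / (t * Real.sqrt (t^2 - (s₀/2)^2)) := by
        apply div_lt_div_of_pos_left (by positivity) h1 h2
      exact mul_lt_mul_of_neg_left hker hFn
  -- comparison of the positive parts
  have hPle : (∫ θ in Real.arcsin (s₀ / t)..(π/2),
        (∫ σ in (0:ℝ)..(t * Real.sin θ), f σ) * Real.sin θ)
      ≤ ∫ θ in Real.arcsin (s₀ / s)..(π/2),
        (∫ σ in (0:ℝ)..(s * Real.sin θ), f σ) * Real.sin θ := by
    have hsplit2 : (∫ θ in Real.arcsin (s₀ / s)..(π/2),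
          (∫ σ in (0:ℝ)..(s * Real.sin θ), f σ) * Real.sin θ)
        = (∫ θ in Real.arcsin (s₀ / s)..Real.arcsin (s₀ / t),
            (∫ σ in (0:ℝ)..(s * Real.sin θ), f σ) * Real.sin θ)
          + ∫ θ in Real.arcsin (s₀ / t)..(π/2),
            (∫ σ in (0:ℝ)..(s * Real.sin θ), f σ) * Real.sin θ :=
      (intervalIntegral.integral_add_adjacent_intervals (hi s _ _) (hi s _ _)).symm
    rw [hsplit2]
    have h1 : 0 ≤ ∫ θ in Real.arcsin (s₀ / s)..Real.arcsin (s₀ / t),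
        (∫ σ in (0:ℝ)..(s * Real.sin θ), f σ) * Real.sin θ := by
      apply intervalIntegral.integral_nonneg hθst.le
      intro θ hθ
      have hsin : s₀ / s ≤ Real.sin θ := by
        rw [← hsinθs]
        rcases eq_or_lt_of_le hθ.1 with h | h
        · rw [h]
        · exact (Real.strictMonoOn_sin ⟨by linarith [hθs0], by linarith [hθ.2, hθtlt]⟩
            ⟨by linarith [hθ.1, hθs0], by linarith [hθ.2, hθtlt]⟩ h).le
      have hsin0 : 0 < Real.sin θ := lt_of_lt_of_le hxs0 hsin
      have harg : s₀ ≤ s * Real.sin θ := by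
        calc s₀ = s * (s₀ / s) := by field_simp
          _ ≤ s * Real.sin θ := by nlinarith
      have hFge : 0 ≤ (∫ σ in (0:ℝ)..(s * Real.sin θ), f σ) := by
        rcases eq_or_lt_of_le harg with h | h
        · rw [← h, hFs₀]
        · exact (hFpos _ h).le
      positivity
    have h2 : (∫ θ in Real.arcsin (s₀ / t)..(π/2),
          (∫ σ in (0:ℝ)..(t * Real.sin θ), f σ) * Real.sin θ)
        ≤ ∫ θ in Real.arcsin (s₀ / t)..(π/2),
          (∫ σ in (0:ℝ)..(s * Real.sin θ), f σ) * Real.sin θ := by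
      apply intervalIntegral.integral_mono_on hθtlt.le (hi t _ _) (hi s _ _)
      intro θ hθ
      have hsin : s₀ / t ≤ Real.sin θ := by
        rw [← hsinθt]
        rcases eq_or_lt_of_le hθ.1 with h | h
        · rw [h]
        · exact (Real.strictMonoOn_sin ⟨by linarith [hθt0], hθtlt.le⟩
            ⟨by linarith [hθ.1, hθt0], hθ.2⟩ h).le
      have hsin0 : 0 < Real.sin θ := lt_of_lt_of_le hxt0 hsin
      have hargt : s₀ ≤ t * Real.sin θ := by
        calc s₀ = t * (s₀ / t) := by field_simp
          _ ≤ t * Real.sin θ := by nlinarith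
      have hargs : t * Real.sin θ < s * Real.sin θ := by nlinarith
      have hFle : (∫ σ in (0:ℝ)..(t * Real.sin θ), f σ)
          ≤ (∫ σ in (0:ℝ)..(s * Real.sin θ), f σ) := by
        rcases eq_or_lt_of_le hargt with h | h
        · rw [← h, hFs₀]
          exact (hFpos _ (by rw [← h] at hargs; exact hargs)).le
        · exact hFmono h (lt_trans h hargs) hargs.le
      exact mul_le_mul_of_nonneg_right hFle hsin0.le
    linarith
  rw [hsplitT, hsplitS, hNt, hNs]
  linarith


end KappaProof

/-- for `s > t > s₀`,
`∫₀ˢ f(σ)√(1-σ²/s²) dσ > ∫₀ᵗ f(σ)√(1-σ²/t²) dσ`; i.e. `κ` strictly increases on `(s₀, ∞)`. -/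
theorem kappa_strictMonoOn (f : ℝ → ℝ) (hflip : LocallyLipschitz f)
    (s₀ : ℝ) (hF : CondL2 (fun s => ∫ σ in (0:ℝ)..s, f σ) s₀) :
    (∀ s t : ℝ, s₀ < t → t < s →
      (∫ σ in (0:ℝ)..t, f σ * Real.sqrt (1 - σ ^ 2 / t ^ 2)) <
        ∫ σ in (0:ℝ)..s, f σ * Real.sqrt (1 - σ ^ 2 / s ^ 2)) ∧
    StrictMonoOn (kappa f) (Set.Ioi s₀) := by
  obtain ⟨hs₀, hFs₀, hFneg, hFpos, hFmono, -⟩ := hF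
  have hf : Continuous f := hflip.continuous
  have key : ∀ s t : ℝ, s₀ < t → t < s →
      (∫ σ in (0:ℝ)..t, f σ * Real.sqrt (1 - σ ^ 2 / t ^ 2)) <
        ∫ σ in (0:ℝ)..s, f σ * Real.sqrt (1 - σ ^ 2 / s ^ 2) :=
    fun s t hst hts => KappaProof.main_ineq hf hs₀ hFs₀ hFneg hFpos hFmono hst hts
  refine ⟨key, ?_⟩
  intro a ha b hb hab
  unfold kappa
  exact mul_lt_mul_of_pos_left (key b a ha hab) (div_pos two_pos Real.pi_pos)
end
end

section
/- One has lim_{s→∞} ∫_0^s f(σ) √(1 − σ²/s²) dσ = ∞; that is, κ(s) → ∞ as s → ∞. -/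
open Real Set Filter MeasureTheory
open scoped RealInnerProductSpace

noncomputable section

/-- Second-mean-value style lemma: if all partial integrals `∫_A^r f` are nonnegative
(for `A ≤ r ≤ s`), then the weighted integral with the decreasing weight
`√(1 - σ²/s²)` is nonnegative. Proved by a layer-cake/Fubini argument. -/
lemma tail_nonneg (f : ℝ → ℝ) (hf : Continuous f) (A s : ℝ) (hA : 0 ≤ A) (hAs : A ≤ s)
    (hmono : ∀ r, A ≤ r → r ≤ s → 0 ≤ ∫ σ in A..r, f σ) :
    0 ≤ ∫ σ in A..s, f σ * Real.sqrt (1 - σ ^ 2 / s ^ 2) := by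
  rcases eq_or_lt_of_le hAs with h | hlt
  · simp [← h]
  have hs : 0 < s := lt_of_le_of_lt hA hlt
  set μ : Measure ℝ := volume.restrict (Ioc A s) with hμ
  set ν : Measure ℝ := volume.restrict (Ioc (0:ℝ) 1) with hν
  have hμfin : IsFiniteMeasure μ := by
    constructor
    rw [hμ, Measure.restrict_apply_univ, Real.volume_Ioc]
    exact ENNReal.ofReal_lt_top
  have hνfin : IsFiniteMeasure ν := by
    constructor
    rw [hν, Measure.restrict_apply_univ, Real.volume_Ioc]
    exact ENNReal.ofReal_lt_top
  set H : ℝ → ℝ → ℝ := fun σ u => if σ ^ 2 + s ^ 2 * u ^ 2 < s ^ 2 then f σ else 0 with hH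
  -- measurability
  have hSopen : IsOpen {p : ℝ × ℝ | p.1 ^ 2 + s ^ 2 * p.2 ^ 2 < s ^ 2} :=
    isOpen_lt (by fun_prop) continuous_const
  have hHmeas : Measurable (Function.uncurry H) := by
    have : Function.uncurry H = fun p : ℝ × ℝ =>
        Set.indicator {p : ℝ × ℝ | p.1 ^ 2 + s ^ 2 * p.2 ^ 2 < s ^ 2} (fun p => f p.1) p := by
      funext p
      simp [Function.uncurry, hH, Set.indicator_apply, Set.mem_setOf_eq]
    rw [this]
    exact (Measurable.indicator (hf.measurable.comp measurable_fst) hSopen.measurableSet)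
  -- bound
  obtain ⟨M, hM⟩ := (isCompact_Icc (a := A) (b := s)).exists_bound_of_continuousOn hf.continuousOn
  have hHint : Integrable (Function.uncurry H) (μ.prod ν) := by
    refine Integrable.mono' (integrable_const M) hHmeas.aestronglyMeasurable ?_
    have hprod : μ.prod ν = (volume.prod volume).restrict ((Ioc A s) ×ˢ (Ioc (0:ℝ) 1)) :=
      Measure.prod_restrict _ _
    rw [hprod]
    filter_upwards [ae_restrict_mem (measurableSet_Ioc.prod measurableSet_Ioc)] with p hp
    rcases hp with ⟨hp1, _⟩
    have : |Function.uncurry H p| ≤ |f p.1| := by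
      simp only [Function.uncurry, hH]
      split <;> simp [abs_nonneg]
    calc ‖Function.uncurry H p‖ ≤ |f p.1| := this
      _ ≤ M := hM p.1 ⟨hp1.1.le, hp1.2⟩
  have hswap : ∫ σ, ∫ u, H σ u ∂ν ∂μ = ∫ u, ∫ σ, H σ u ∂μ ∂ν :=
    integral_integral_swap hHint
  -- left side equals target
  have hleft : ∫ σ, ∫ u, H σ u ∂ν ∂μ = ∫ σ in A..s, f σ * Real.sqrt (1 - σ ^ 2 / s ^ 2) := by
    rw [intervalIntegral.integral_of_le hAs]
    refine setIntegral_congr_fun measurableSet_Ioc fun σ hσ => ?_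
    have hσ0 : 0 < σ := lt_of_le_of_lt hA hσ.1
    have hnn : 0 ≤ 1 - σ ^ 2 / s ^ 2 := by
      have : σ ^ 2 ≤ s ^ 2 := pow_le_pow_left₀ hσ0.le hσ.2 2
      have := div_le_one_of_le₀ this (by positivity)
      linarith
    set g : ℝ := Real.sqrt (1 - σ ^ 2 / s ^ 2) with hg
    have hg0 : 0 ≤ g := Real.sqrt_nonneg _
    have hg1 : g ≤ 1 := by
      rw [hg]
      have : 0 ≤ σ ^ 2 / s ^ 2 := by positivity
      exact Real.sqrt_le_one.2 (by linarith)
    have : ∫ u, H σ u ∂ν = ∫ u in Ioc (0:ℝ) 1, (Set.Iio g).indicator (fun _ => f σ) u := by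
      refine setIntegral_congr_fun measurableSet_Ioc fun u hu => ?_
      simp only [hH, Set.indicator_apply, Set.mem_Iio]
      congr 1
      simp only [eq_iff_iff]
      have hs2 : (0:ℝ) < s ^ 2 := by positivity
      have heq : (s ^ 2 - σ ^ 2) / s ^ 2 = 1 - σ ^ 2 / s ^ 2 := by
        rw [sub_div, div_self hs2.ne']
      constructor
      · intro h
        have hu2 : u ^ 2 < 1 - σ ^ 2 / s ^ 2 := by
          rw [← heq]
          exact (lt_div_iff₀ hs2).2 (by nlinarith)
        exact (Real.lt_sqrt hu.1.le).2 hu2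
      · intro h
        have hu2 : u ^ 2 < 1 - σ ^ 2 / s ^ 2 := by
          calc u ^ 2 < g ^ 2 := pow_lt_pow_left₀ h hu.1.le two_ne_zero
            _ = 1 - σ ^ 2 / s ^ 2 := by rw [hg, Real.sq_sqrt hnn]
        rw [← heq] at hu2
        have := (lt_div_iff₀ hs2).1 hu2
        nlinarith
    rw [this, setIntegral_indicator measurableSet_Iio]
    have hset : Ioc (0:ℝ) 1 ∩ Iio g = Ioo 0 g := by
      ext x
      constructor
      · rintro ⟨⟨hx0, _⟩, hxg⟩; exact ⟨hx0, hxg⟩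
      · rintro ⟨hx0, hxg⟩; exact ⟨⟨hx0, le_trans hxg.le hg1⟩, hxg⟩
    rw [hset, setIntegral_const, measureReal_def, Real.volume_Ioo, sub_zero, ENNReal.toReal_ofReal hg0,
      smul_eq_mul, mul_comm]
  -- right side nonneg
  have hright : 0 ≤ ∫ u, ∫ σ, H σ u ∂μ ∂ν := by
    refine setIntegral_nonneg measurableSet_Ioc fun u hu => ?_
    set r : ℝ := s * Real.sqrt (1 - u ^ 2) with hr
    have hu1 : 1 - u ^ 2 ≥ 0 := by nlinarith [hu.1, hu.2]
    have hr0 : 0 ≤ r := mul_nonneg hs.le (Real.sqrt_nonneg _)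
    have hrs : r ≤ s := by
      rw [hr]
      nlinarith [Real.sqrt_le_one.2 (by nlinarith [hu.1] : 1 - u ^ 2 ≤ 1), Real.sqrt_nonneg (1 - u^2), hs]
    have hr2 : r ^ 2 = s ^ 2 * (1 - u ^ 2) := by
      rw [hr, mul_pow, Real.sq_sqrt hu1]
    have hcond : ∀ σ ∈ Ioc A s, (σ ^ 2 + s ^ 2 * u ^ 2 < s ^ 2 ↔ σ < r) := by
      intro σ hσ
      have hσ0 : 0 ≤ σ := le_trans hA hσ.1.le
      constructor
      · intro h
        have : σ ^ 2 < r ^ 2 := by rw [hr2]; nlinarith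
        exact (pow_lt_pow_iff_left₀ hσ0 hr0 two_ne_zero).1 this
      · intro h
        have : σ ^ 2 < r ^ 2 := pow_lt_pow_left₀ h hσ0 two_ne_zero
        rw [hr2] at this; nlinarith
    have : ∫ σ, H σ u ∂μ = ∫ σ in Ioc A s, (Set.Iio r).indicator f σ := by
      refine setIntegral_congr_fun measurableSet_Ioc fun σ hσ => ?_
      simp only [hH, Set.indicator_apply, Set.mem_Iio]
      congr 1
      simp only [eq_iff_iff]
      exact hcond σ hσ
    rw [this, setIntegral_indicator measurableSet_Iio]
    rcases le_or_gt r A with hrA | hAr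
    · have : Ioc A s ∩ Iio r = ∅ := by
        ext x
        simp only [mem_inter_iff, mem_Ioc, mem_Iio, mem_empty_iff_false, iff_false, not_and]
        rintro ⟨hx1, _⟩ hx2
        exact absurd (lt_trans hx2 (lt_of_le_of_lt hrA hx1)) (lt_irrefl x)
      rw [this]
      simp
    · have hset : Ioc A s ∩ Iio r = Ioo A r := by
        ext x
        constructor
        · rintro ⟨⟨hx1, _⟩, hx2⟩; exact ⟨hx1, hx2⟩
        · rintro ⟨hx1, hx2⟩; exact ⟨⟨hx1, le_trans hx2.le hrs⟩, hx2⟩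
      rw [hset, ← integral_Ioc_eq_integral_Ioo, ← intervalIntegral.integral_of_le hAr.le]
      exact hmono r hAr.le hrs
  rw [← hleft, hswap]
  exact hright

theorem kappa_aux (f : ℝ → ℝ) (hflip : LocallyLipschitz f)
    (s₀ : ℝ) (hF : CondL2 (fun s => ∫ σ in (0:ℝ)..s, f σ) s₀) :
    Filter.Tendsto (fun s => ∫ σ in (0:ℝ)..s, f σ * Real.sqrt (1 - σ ^ 2 / s ^ 2))
        Filter.atTop Filter.atTop := by
  have hf : Continuous f := hflip.continuous
  obtain ⟨hs₀, -, -, -, hFmono, htop⟩ := hF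
  set F : ℝ → ℝ := fun s => ∫ σ in (0:ℝ)..s, f σ with hFdef
  rw [tendsto_atTop]
  intro C
  obtain ⟨B, hB⟩ := Filter.eventually_atTop.1 (htop.eventually_ge_atTop (C + 1))
  set A : ℝ := max B (s₀ + 1) with hAdef
  have hAs₀ : s₀ < A := lt_of_lt_of_le (lt_add_one s₀) (le_max_right _ _)
  have hA0 : 0 < A := lt_trans hs₀ hAs₀
  have hFA : C + 1 ≤ F A := hB A (le_max_left _ _)
  obtain ⟨M₀, hM₀⟩ := (isCompact_Icc (a := (0:ℝ)) (b := A)).exists_bound_of_continuousOn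
    hf.continuousOn
  set M : ℝ := max M₀ 0 with hMdef
  have hM : ∀ x ∈ Icc (0:ℝ) A, |f x| ≤ M := fun x hx => le_trans (hM₀ x hx) (le_max_left _ _)
  have hMnn : 0 ≤ M := le_max_right _ _
  filter_upwards [eventually_ge_atTop A, eventually_ge_atTop (max 1 (M * A ^ 3))] with s hsA hs1
  have hs1' : (1:ℝ) ≤ s := le_trans (le_max_left _ _) hs1
  have hsM : M * A ^ 3 ≤ s ^ 2 := by
    calc M * A ^ 3 ≤ s := le_trans (le_max_right _ _) hs1
      _ ≤ s ^ 2 := by nlinarith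
  have hs0 : (0:ℝ) < s := lt_of_lt_of_le one_pos hs1'
  have hgcont : Continuous fun σ : ℝ => f σ * Real.sqrt (1 - σ ^ 2 / s ^ 2) := by
    exact hf.mul (Real.continuous_sqrt.comp (by fun_prop))
  have hInt1 : IntervalIntegrable (fun σ => f σ * Real.sqrt (1 - σ ^ 2 / s ^ 2)) volume 0 A :=
    hgcont.intervalIntegrable _ _
  have hInt2 : IntervalIntegrable (fun σ => f σ * Real.sqrt (1 - σ ^ 2 / s ^ 2)) volume A s :=
    hgcont.intervalIntegrable _ _
  have hsplit : (∫ σ in (0:ℝ)..s, f σ * Real.sqrt (1 - σ ^ 2 / s ^ 2))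
      = (∫ σ in (0:ℝ)..A, f σ * Real.sqrt (1 - σ ^ 2 / s ^ 2))
        + ∫ σ in A..s, f σ * Real.sqrt (1 - σ ^ 2 / s ^ 2) :=
    (intervalIntegral.integral_add_adjacent_intervals hInt1 hInt2).symm
  -- tail nonneg
  have htail : 0 ≤ ∫ σ in A..s, f σ * Real.sqrt (1 - σ ^ 2 / s ^ 2) := by
    refine tail_nonneg f hf A s hA0.le hsA fun r hr hrs => ?_
    have hint0r : IntervalIntegrable f volume 0 r := hf.intervalIntegrable _ _
    have hint0A : IntervalIntegrable f volume 0 A := hf.intervalIntegrable _ _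
    have : (∫ σ in (0:ℝ)..r, f σ) - ∫ σ in (0:ℝ)..A, f σ = ∫ σ in A..r, f σ :=
      intervalIntegral.integral_interval_sub_left hint0r hint0A
    rw [← this, sub_nonneg]
    exact hFmono (mem_Ioi.2 hAs₀) (mem_Ioi.2 (lt_of_lt_of_le hAs₀ hr)) hr
  -- head close to F A
  have hhead : F A - 1 ≤ ∫ σ in (0:ℝ)..A, f σ * Real.sqrt (1 - σ ^ 2 / s ^ 2) := by
    have hfint : IntervalIntegrable f volume 0 A := hf.intervalIntegrable _ _
    have hdiff : (∫ σ in (0:ℝ)..A, f σ) - (∫ σ in (0:ℝ)..A, f σ * Real.sqrt (1 - σ ^ 2 / s ^ 2))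
        = ∫ σ in (0:ℝ)..A, f σ * (1 - Real.sqrt (1 - σ ^ 2 / s ^ 2)) := by
      rw [← intervalIntegral.integral_sub hfint hInt1]
      congr 1
      funext σ
      ring
    have hbound : |∫ σ in (0:ℝ)..A, f σ * (1 - Real.sqrt (1 - σ ^ 2 / s ^ 2))| ≤ 1 := by
      have h1 : ∀ x ∈ Set.uIoc (0:ℝ) A,
          ‖f x * (1 - Real.sqrt (1 - x ^ 2 / s ^ 2))‖ ≤ M * (A ^ 2 / s ^ 2) := by
        intro x hx
        rw [Set.uIoc_of_le hA0.le] at hx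
        have hx0 : 0 < x := hx.1
        have hxA : x ≤ A := hx.2
        have hxs : x ≤ s := le_trans hxA hsA
        have hnn : 0 ≤ 1 - x ^ 2 / s ^ 2 := by
          have h1 : x ^ 2 ≤ s ^ 2 := pow_le_pow_left₀ hx0.le hxs 2
          have := div_le_one_of_le₀ h1 (by positivity)
          linarith
        have hle1 : Real.sqrt (1 - x ^ 2 / s ^ 2) ≤ 1 := by
          have : 0 ≤ x ^ 2 / s ^ 2 := by positivity
          exact Real.sqrt_le_one.2 (by linarith)
        have hge : 1 - x ^ 2 / s ^ 2 ≤ Real.sqrt (1 - x ^ 2 / s ^ 2) := by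
          have hu01 : 0 ≤ x ^ 2 / s ^ 2 := by positivity
          exact (Real.le_sqrt hnn hnn).2 (by nlinarith [mul_nonneg hnn hu01])
        have habs : |1 - Real.sqrt (1 - x ^ 2 / s ^ 2)| ≤ x ^ 2 / s ^ 2 := by
          rw [abs_of_nonneg (by linarith)]
          linarith
        have hxA2 : x ^ 2 / s ^ 2 ≤ A ^ 2 / s ^ 2 := by
          apply div_le_div_of_nonneg_right (pow_le_pow_left₀ hx0.le hxA 2) (by positivity)
        calc ‖f x * (1 - Real.sqrt (1 - x ^ 2 / s ^ 2))‖
            = |f x| * |1 - Real.sqrt (1 - x ^ 2 / s ^ 2)| := abs_mul _ _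
          _ ≤ M * (A ^ 2 / s ^ 2) :=
            mul_le_mul (hM x ⟨hx0.le, hxA⟩) (le_trans habs hxA2) (abs_nonneg _) hMnn
      have h2 := intervalIntegral.norm_integral_le_of_norm_le_const h1
      rw [sub_zero, abs_of_nonneg hA0.le] at h2
      calc |∫ σ in (0:ℝ)..A, f σ * (1 - Real.sqrt (1 - σ ^ 2 / s ^ 2))|
          ≤ M * (A ^ 2 / s ^ 2) * A := h2
        _ ≤ 1 := by
          rw [show M * (A ^ 2 / s ^ 2) * A = M * A ^ 3 / s ^ 2 from by ring,
            div_le_one (by positivity)]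
          exact hsM
    have h3 := (abs_le.1 hbound).2
    rw [← hdiff] at h3
    have hFAeq : F A = ∫ σ in (0:ℝ)..A, f σ := rfl
    linarith
  calc C = (C + 1) - 1 + 0 := by ring
    _ ≤ (F A - 1) + ∫ σ in A..s, f σ * Real.sqrt (1 - σ ^ 2 / s ^ 2) := by
        apply add_le_add _ htail
        linarith
    _ ≤ (∫ σ in (0:ℝ)..A, f σ * Real.sqrt (1 - σ ^ 2 / s ^ 2))
          + ∫ σ in A..s, f σ * Real.sqrt (1 - σ ^ 2 / s ^ 2) := add_le_add_left hhead _
    _ = _ := hsplit.symm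

/-- `∫₀ˢ f(σ)√(1-σ²/s²) dσ → ∞` as `s → ∞`; i.e. `κ(s) → ∞`. -/
theorem kappa_tendsto_atTop (f : ℝ → ℝ) (hflip : LocallyLipschitz f)
    (s₀ : ℝ) (hF : CondL2 (fun s => ∫ σ in (0:ℝ)..s, f σ) s₀) :
    Filter.Tendsto (fun s => ∫ σ in (0:ℝ)..s, f σ * Real.sqrt (1 - σ ^ 2 / s ^ 2))
        Filter.atTop Filter.atTop ∧
    Filter.Tendsto (kappa f) Filter.atTop Filter.atTop := by
  have key := kappa_aux f hflip s₀ hF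
  refine ⟨key, ?_⟩
  have hpos : (0:ℝ) < 2 / π := by positivity
  exact Tendsto.const_mul_atTop hpos key
end
end

section
/- Let γ : ℝ → ℝ be continuous with γ(0) = 0 and s·γ(s) ≥ 0 for all s ∈ ℝ. Then for every nonzero v = (v₁, v₂) ∈ ℝ², the average function satisfies γ̄(v) = ρ̄(|v|) · v/|v|, where ρ̄ : [0, ∞) → [0, ∞) is given by ρ̄(s) := (1/2π) ∫_0^{2π} γ(s sin φ) sin φ dφ, and ρ̄(s) ≥ 0 for all s ≥ 0. -/
open Real Set Filter MeasureTheory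
open scoped RealInnerProductSpace

noncomputable section

private lemma aux_J_zero (γ : ℝ → ℝ) (hγ : Continuous γ) (r : ℝ) (hr : r ≠ 0) :
    (∫ φ in (0:ℝ)..(2*π), γ (r * Real.sin φ) * Real.cos φ) = 0 := by
  have hG : ∀ x : ℝ, HasDerivAt (fun y => ∫ t in (0:ℝ)..y, γ t) (γ x) x := fun x =>
    intervalIntegral.integral_hasDerivAt_right (hγ.intervalIntegrable _ _)
      (hγ.stronglyMeasurable.stronglyMeasurableAtFilter) hγ.continuousAt
  have hderiv : ∀ φ ∈ Set.uIcc (0:ℝ) (2*π),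
      HasDerivAt (fun φ => (1/r) * ∫ t in (0:ℝ)..(r * Real.sin φ), γ t)
        (γ (r * Real.sin φ) * Real.cos φ) φ := by
    intro φ _
    have h1 : HasDerivAt (fun φ : ℝ => r * Real.sin φ) (r * Real.cos φ) φ :=
      (Real.hasDerivAt_sin φ).const_mul r
    have h2 := ((hG (r * Real.sin φ)).comp φ h1).const_mul (1/r)
    convert h2 using 1
    · rfl
    · rfl
    · rfl
    · field_simp
  have := intervalIntegral.integral_eq_sub_of_hasDerivAt hderiv
    (((hγ.comp (continuous_const.mul Real.continuous_sin)).mul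
      Real.continuous_cos).intervalIntegrable _ _)
  rw [this]
  simp [Real.sin_two_pi]

private lemma aux_shift_per (F : ℝ → ℝ) (hF : Function.Periodic F (2*π)) (θ : ℝ) :
    (∫ φ in (0:ℝ)..(2*π), F (θ - φ)) = ∫ ψ in (0:ℝ)..(2*π), F ψ := by
  rw [intervalIntegral.integral_comp_sub_left]
  have := hF.intervalIntegral_add_eq (θ - 2*π) 0
  simpa using this

private lemma aux_A (γ : ℝ → ℝ) (hγ : Continuous γ) (r θ : ℝ) (hr : r ≠ 0) :
    (∫ φ in (0:ℝ)..(2*π), γ (r * Real.sin (θ - φ)) * (-Real.sin φ)) =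
      Real.cos θ * ∫ φ in (0:ℝ)..(2*π), γ (r * Real.sin φ) * Real.sin φ := by
  have key : (∫ φ in (0:ℝ)..(2*π), γ (r * Real.sin (θ - φ)) * (-Real.sin φ)) =
      ∫ ψ in (0:ℝ)..(2*π), γ (r * Real.sin ψ) * (-Real.sin (θ - ψ)) := by
    have hP : Function.Periodic (fun ψ => γ (r * Real.sin ψ) * (-Real.sin (θ - ψ))) (2*π) := by
      intro ψ
      simp only [Real.sin_add_two_pi]
      have : θ - (ψ + 2*π) = (θ - ψ) - 2*π := by ring
      rw [this, Real.sin_sub_two_pi]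
    have h2 := aux_shift_per _ hP θ
    rw [← h2]
    apply intervalIntegral.integral_congr
    intro φ _
    simp only []
    have : θ - (θ - φ) = φ := by ring
    rw [this]
  rw [key]
  have expand : ∀ ψ : ℝ, γ (r * Real.sin ψ) * (-Real.sin (θ - ψ)) =
      Real.cos θ * (γ (r * Real.sin ψ) * Real.sin ψ) -
      Real.sin θ * (γ (r * Real.sin ψ) * Real.cos ψ) := by
    intro ψ; rw [Real.sin_sub]; ring
  rw [intervalIntegral.integral_congr (fun ψ _ => expand ψ)]
  rw [intervalIntegral.integral_sub, intervalIntegral.integral_const_mul,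
    intervalIntegral.integral_const_mul, aux_J_zero γ hγ r hr]
  · ring
  · exact (continuous_const.mul ((hγ.comp (continuous_const.mul Real.continuous_sin)).mul
      Real.continuous_sin)).intervalIntegrable _ _
  · exact (continuous_const.mul ((hγ.comp (continuous_const.mul Real.continuous_sin)).mul
      Real.continuous_cos)).intervalIntegrable _ _

private lemma aux_B (γ : ℝ → ℝ) (hγ : Continuous γ) (r θ : ℝ) (hr : r ≠ 0) :
    (∫ φ in (0:ℝ)..(2*π), γ (r * Real.sin (θ - φ)) * Real.cos φ) =
      Real.sin θ * ∫ φ in (0:ℝ)..(2*π), γ (r * Real.sin φ) * Real.sin φ := by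
  have key : (∫ φ in (0:ℝ)..(2*π), γ (r * Real.sin (θ - φ)) * Real.cos φ) =
      ∫ ψ in (0:ℝ)..(2*π), γ (r * Real.sin ψ) * Real.cos (θ - ψ) := by
    have hP : Function.Periodic (fun ψ => γ (r * Real.sin ψ) * Real.cos (θ - ψ)) (2*π) := by
      intro ψ
      simp only [Real.sin_add_two_pi]
      have : θ - (ψ + 2*π) = (θ - ψ) - 2*π := by ring
      rw [this, Real.cos_sub_two_pi]
    have h2 := aux_shift_per _ hP θ
    rw [← h2]
    apply intervalIntegral.integral_congr
    intro φ _
    simp only []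
    have : θ - (θ - φ) = φ := by ring
    rw [this]
  rw [key]
  have expand : ∀ ψ : ℝ, γ (r * Real.sin ψ) * Real.cos (θ - ψ) =
      Real.sin θ * (γ (r * Real.sin ψ) * Real.sin ψ) +
      Real.cos θ * (γ (r * Real.sin ψ) * Real.cos ψ) := by
    intro ψ; rw [Real.cos_sub]; ring
  rw [intervalIntegral.integral_congr (fun ψ _ => expand ψ)]
  rw [intervalIntegral.integral_add, intervalIntegral.integral_const_mul,
    intervalIntegral.integral_const_mul, aux_J_zero γ hγ r hr]
  · ring
  · exact (continuous_const.mul ((hγ.comp (continuous_const.mul Real.continuous_sin)).mul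
      Real.continuous_sin)).intervalIntegrable _ _
  · exact (continuous_const.mul ((hγ.comp (continuous_const.mul Real.continuous_sin)).mul
      Real.continuous_cos)).intervalIntegrable _ _

private lemma vec2_decomp (a b : ℝ) : vec2 a b = a • vec2 1 0 + b • vec2 0 1 := by
  ext i
  fin_cases i <;>
    simp [vec2, PiLp.add_apply, PiLp.smul_apply, smul_eq_mul]

private lemma vec_integral (g : ℝ → ℝ) (hg : Continuous g) :
    (∫ φ in (0:ℝ)..(2*π), g φ • vec2 (-Real.sin φ) (Real.cos φ)) =
      (∫ φ in (0:ℝ)..(2*π), g φ * (-Real.sin φ)) • vec2 1 0 +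
      (∫ φ in (0:ℝ)..(2*π), g φ * Real.cos φ) • vec2 0 1 := by
  have hcong : ∀ φ ∈ Set.uIcc (0:ℝ) (2*π), g φ • vec2 (-Real.sin φ) (Real.cos φ) =
      (g φ * (-Real.sin φ)) • vec2 1 0 + (g φ * Real.cos φ) • vec2 0 1 := by
    intro φ _
    rw [vec2_decomp (-Real.sin φ) (Real.cos φ), smul_add, smul_smul, smul_smul]
  rw [intervalIntegral.integral_congr hcong, intervalIntegral.integral_add,
    intervalIntegral.integral_smul_const, intervalIntegral.integral_smul_const]
  · exact ((hg.mul Real.continuous_sin.neg).smul continuous_const).intervalIntegrable _ _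
  · exact ((hg.mul Real.continuous_cos).smul continuous_const).intervalIntegrable _ _

/-- for continuous `γ` with `γ(0) = 0` and `s·γ(s) ≥ 0`, and nonzero `v ∈ ℝ²`,
`γ̄(v) = ρ̄(|v|) · v / |v|`, with `ρ̄(s) ≥ 0` for all `s ≥ 0`. -/
theorem gbar_eq_rhobar_smul (γ : ℝ → ℝ) (hγ : Continuous γ) (h0 : γ 0 = 0)
    (hsg : ∀ s : ℝ, 0 ≤ s * γ s) :
    (∀ v : E2, v ≠ 0 → gbar γ v = (rhobar γ ‖v‖ / ‖v‖) • v) ∧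
    (∀ s : ℝ, 0 ≤ s → 0 ≤ rhobar γ s) := by
  constructor
  · intro v hv
    set r := ‖v‖ with hrdef
    have hr0 : 0 < r := norm_pos_iff.mpr hv
    have hr : r ≠ 0 := ne_of_gt hr0
    set z : ℂ := Complex.mk (v 0) (v 1) with hz
    have hre : z.re = v 0 := rfl
    have him : z.im = v 1 := rfl
    have habs : ‖z‖ = r := by
      rw [Complex.norm_def, Complex.normSq_apply, hre, him, hrdef, EuclideanSpace.norm_eq]
      congr 1
      simp [Fin.sum_univ_two, Real.norm_eq_abs, sq_abs]
      ring
    have hz0 : z ≠ 0 := by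
      intro h
      rw [h] at habs
      simp at habs
      exact hr habs.symm
    set θ := Complex.arg z with hθ
    have hv0 : v 0 = r * Real.cos θ := by
      rw [hθ, Complex.cos_arg hz0, habs, hre]; field_simp
    have hv1 : v 1 = r * Real.sin θ := by
      rw [hθ, Complex.sin_arg, habs, him]; field_simp
    have harg : ∀ φ : ℝ, -(v 0) * Real.sin φ + v 1 * Real.cos φ = r * Real.sin (θ - φ) := by
      intro φ; rw [hv0, hv1, Real.sin_sub]; ring
    have hgc : Continuous fun φ => γ (r * Real.sin (θ - φ)) :=
      hγ.comp (continuous_const.mul (Real.continuous_sin.comp (continuous_const.sub continuous_id)))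
    have step : gbar γ v = (1 / (2 * π)) •
        ((Real.cos θ * ∫ φ in (0:ℝ)..(2*π), γ (r * Real.sin φ) * Real.sin φ) • vec2 1 0 +
         (Real.sin θ * ∫ φ in (0:ℝ)..(2*π), γ (r * Real.sin φ) * Real.sin φ) • vec2 0 1) := by
      rw [gbar]
      congr 1
      rw [intervalIntegral.integral_congr (g := fun φ =>
          γ (r * Real.sin (θ - φ)) • vec2 (-Real.sin φ) (Real.cos φ))
          (fun φ _ => by rw [harg φ])]
      rw [vec_integral _ hgc, aux_A γ hγ r θ hr, aux_B γ hγ r θ hr]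
    rw [step]
    set I := ∫ φ in (0:ℝ)..(2*π), γ (r * Real.sin φ) * Real.sin φ with hI
    have hrho : rhobar γ r = (1 / (2 * π)) * I := rfl
    have hveq : v = vec2 (r * Real.cos θ) (r * Real.sin θ) := by
      ext i
      fin_cases i
      · exact hv0
      · exact hv1
    rw [hveq]
    ext i
    fin_cases i <;>
      simp only [PiLp.smul_apply, PiLp.add_apply, smul_eq_mul, vec2,
        Matrix.cons_val_zero, Matrix.cons_val_one, Matrix.head_cons, hrho, Fin.zero_eta, Fin.mk_one] <;>
      field_simp <;> ring
  · intro s hs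
    rcases eq_or_lt_of_le hs with h | h
    · simp [rhobar, ← h, h0]
    · rw [rhobar]
      apply mul_nonneg (by positivity)
      apply intervalIntegral.integral_nonneg (by positivity)
      intro u _
      nlinarith [hsg (s * Real.sin u)]
end
end

section
/- Let γ : ℝ → ℝ be continuous and satisfy (G1) and (G2), and define ρ̄(s) := (1/2π) ∫_0^{2π} γ(s sin φ) sin φ dφ for s ≥ 0. Then ρ̄(s) = 0 for all s ≥ 0 if and only if γ ≡ 0; moreover, if γ ≢ 0 then there exists a class-K function α such that ρ̄(s) ≥ α(s) for all s ≥ 0. -/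
open Real Set Filter MeasureTheory
open scoped RealInnerProductSpace

noncomputable section

private lemma key (γ : ℝ → ℝ) (hγ : Continuous γ) (hG1 : γ 0 = 0 ∧ ∀ s : ℝ, 0 ≤ s * γ s)
    (α₀ : ℝ → ℝ) (hα₀ : ClassK α₀) (hle : ∀ s : ℝ, α₀ |s| ≤ |γ s|) :
    ∃ α, ClassK α ∧ ∀ s : ℝ, 0 ≤ s → α s ≤ rhobar γ s := by
  obtain ⟨hc, h0, hmono⟩ := hα₀
  -- α₀ nonneg on Ici 0
  have hα₀nn : ∀ t : ℝ, 0 ≤ t → 0 ≤ α₀ t := by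
    intro t ht
    rcases eq_or_lt_of_le ht with h | h
    · simp [← h, h0]
    · have := hmono Set.self_mem_Ici (Set.mem_Ici.mpr h.le) h
      linarith [h0]
  -- γ t ≥ α₀ t for t ≥ 0
  have hγge : ∀ t : ℝ, 0 ≤ t → α₀ t ≤ γ t := by
    intro t ht
    have hγnn : 0 ≤ γ t := by
      rcases eq_or_lt_of_le ht with h | h
      · simp [← h, hG1.1]
      · nlinarith [hG1.2 t]
    have := hle t
    rw [abs_of_nonneg ht, abs_of_nonneg hγnn] at this
    exact this
  refine ⟨fun s => (Real.sqrt 2 / 16) * α₀ (s * (Real.sqrt 2 / 2)), ⟨?_, ?_, ?_⟩, ?_⟩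
  · exact (continuousOn_const.mul (hc.comp (continuousOn_id.mul continuousOn_const)
      (fun x hx => by
        have : (0:ℝ) ≤ x := hx
        have h2 : (0:ℝ) ≤ Real.sqrt 2 / 2 := by positivity
        exact mul_nonneg this h2)))
  · simp [h0]
  · intro a ha b hb hab
    have h2 : (0:ℝ) < Real.sqrt 2 / 2 := by positivity
    have := hmono (Set.mem_Ici.mpr (mul_nonneg ha h2.le))
      (Set.mem_Ici.mpr (mul_nonneg hb h2.le)) (by nlinarith)
    have h16 : (0:ℝ) < Real.sqrt 2 / 16 := by positivity
    nlinarith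
  · intro s hs
    rcases eq_or_lt_of_le hs with h | hspos
    · simp [← h, rhobar, hG1.1, h0]
    -- integrand
    set g : ℝ → ℝ := fun φ => γ (s * Real.sin φ) * Real.sin φ with hg
    have hgcont : Continuous g := (hγ.comp (continuous_const.mul Real.continuous_sin)).mul
      Real.continuous_sin
    have hgnn : ∀ φ : ℝ, 0 ≤ g φ := by
      intro φ
      show 0 ≤ γ (s * Real.sin φ) * Real.sin φ
      nlinarith [hG1.2 (s * Real.sin φ), hspos]
    set c : ℝ := α₀ (s * (Real.sqrt 2 / 2)) * (Real.sqrt 2 / 2) with hcdef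
    have hcnn : 0 ≤ c := mul_nonneg (hα₀nn _ (by positivity)) (by positivity)
    -- pointwise bound on [π/4, π/2]
    have hpt : ∀ φ ∈ Set.Icc (π/4) (π/2), c ≤ g φ := by
      intro φ hφ
      have hsin : Real.sqrt 2 / 2 ≤ Real.sin φ := by
        have := Real.sin_pi_div_four
        rw [← this]
        apply Real.strictMonoOn_sin.monotoneOn ⟨by linarith [pi_pos], by linarith [pi_pos]⟩
          ⟨by linarith [pi_pos, hφ.1], hφ.2⟩ hφ.1
      have hargs : s * (Real.sqrt 2 / 2) ≤ s * Real.sin φ := by nlinarith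
      have h1 : α₀ (s * (Real.sqrt 2 / 2)) ≤ α₀ (s * Real.sin φ) := by
        rcases eq_or_lt_of_le hargs with h | h
        · rw [h]
        · exact (hmono (Set.mem_Ici.mpr (by positivity))
            (Set.mem_Ici.mpr (le_trans (by positivity) hargs)) h).le
      have h2 : α₀ (s * Real.sin φ) ≤ γ (s * Real.sin φ) :=
        hγge _ (le_trans (by positivity) hargs)
      exact mul_le_mul (le_trans h1 h2) hsin (by positivity)
        (le_trans (hα₀nn _ (by positivity)) (le_trans h1 h2))
    -- split integral
    have hint : ∀ a b : ℝ, IntervalIntegrable g volume a b :=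
      fun a b => hgcont.intervalIntegrable a b
    have hsplit : (∫ φ in (0:ℝ)..(2*π), g φ) =
        (∫ φ in (0:ℝ)..(π/4), g φ) + (∫ φ in (π/4)..(π/2), g φ) +
          (∫ φ in (π/2)..(2*π), g φ) := by
      rw [intervalIntegral.integral_add_adjacent_intervals (hint 0 (π/4)) (hint (π/4) (π/2)),
        intervalIntegral.integral_add_adjacent_intervals (hint 0 (π/2)) (hint (π/2) (2*π))]
    have hI1 : 0 ≤ ∫ φ in (0:ℝ)..(π/4), g φ :=
      intervalIntegral.integral_nonneg (by linarith [pi_pos]) (fun u _ => hgnn u)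
    have hI3 : 0 ≤ ∫ φ in (π/2)..(2*π), g φ :=
      intervalIntegral.integral_nonneg (by linarith [pi_pos]) (fun u _ => hgnn u)
    have hI2 : (π/4) * c ≤ ∫ φ in (π/4)..(π/2), g φ := by
      have hconst : (∫ _ in (π/4)..(π/2), c) = (π/2 - π/4) * c := by
        rw [intervalIntegral.integral_const, smul_eq_mul]
      have := intervalIntegral.integral_mono_on (by linarith [pi_pos])
        (intervalIntegrable_const) (hint (π/4) (π/2)) hpt
      rw [hconst] at this
      have : (π/4) * c ≤ ∫ φ in (π/4)..(π/2), g φ := by linarith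
      exact this
    have hItot : (π/4) * c ≤ ∫ φ in (0:ℝ)..(2*π), g φ := by
      rw [hsplit]; linarith
    have hπ : (0:ℝ) < π := pi_pos
    rw [rhobar]
    have hfinal : (1 / (2*π)) * ((π/4) * c) = Real.sqrt 2 / 16 * α₀ (s * (Real.sqrt 2 / 2)) := by
      rw [hcdef]; field_simp; ring
    calc Real.sqrt 2 / 16 * α₀ (s * (Real.sqrt 2 / 2)) = (1 / (2*π)) * ((π/4) * c) := hfinal.symm
      _ ≤ (1 / (2*π)) * ∫ φ in (0:ℝ)..(2*π), g φ := by
          apply mul_le_mul_of_nonneg_left hItot (by positivity)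

/-- `ρ̄ ≡ 0` on `[0, ∞)` iff `γ ≡ 0`; and if `γ ≢ 0` then there is a class-K
function `α` with `ρ̄(s) ≥ α(s)` for all `s ≥ 0`. -/
theorem rhobar_zero_iff_and_classK_lowerBound (γ : ℝ → ℝ) (hγ : Continuous γ)
    (hG1 : γ 0 = 0 ∧ ∀ s : ℝ, 0 ≤ s * γ s)
    (hG2 : (∀ s : ℝ, γ s = 0) ∨ ∃ α, ClassK α ∧ ∀ s : ℝ, α |s| ≤ |γ s|) :
    ((∀ s : ℝ, 0 ≤ s → rhobar γ s = 0) ↔ ∀ s : ℝ, γ s = 0) ∧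
    ((¬ ∀ s : ℝ, γ s = 0) → ∃ α, ClassK α ∧ ∀ s : ℝ, 0 ≤ s → α s ≤ rhobar γ s) := by
  constructor
  · constructor
    · intro hzero
      by_contra hne
      rcases hG2 with h | ⟨α₀, hα₀, hle⟩
      · exact hne h
      · obtain ⟨α, ⟨_, hα0, hαmono⟩, hbound⟩ := key γ hγ hG1 α₀ hα₀ hle
        have h1 : α 1 ≤ rhobar γ 1 := hbound 1 (by norm_num)
        have h2 : α 0 < α 1 := hαmono Set.self_mem_Ici (Set.mem_Ici.mpr zero_le_one) one_pos
        rw [hzero 1 (by norm_num)] at h1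
        linarith [hα0 ▸ h2]
    · intro h s _
      simp [rhobar, h]
  · intro hne
    rcases hG2 with h | ⟨α₀, hα₀, hle⟩
    · exact absurd h hne
    · exact key γ hγ hG1 α₀ hα₀ hle
end
end

section
/- Let g : ℝ^n × ℝ → ℝ^n be locally Lipschitz and satisfy g(x, φ + 2π) = g(x, φ) for all x ∈ ℝ^n and φ ∈ ℝ, and define the average ḡ : ℝ^n → ℝ^n by ḡ(x) := (1/2π) ∫_0^{2π} g(x, φ) dφ. Then for each compact set D ⊂ ℝ^n and each pair of positive real numbers (T, ε) there exists ω* > 0 such that: whenever ω ≥ ω*, x : [0, T] → ℝ^n is a solution of ẋ(t) = g(x(t), ωt), η : [0, T] → ℝ^n is a solution of η̇(t) = ḡ(η(t)), η(0) = x(0), and x(t) ∈ D for all t ∈ [0, T], one has |η(t) − x(t)| ≤ ε for all t ∈ [0, T]. -/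
open Real Set Filter MeasureTheory Metric NNReal Topology

set_option maxHeartbeats 2000000

noncomputable section

lemma locallyLipschitz_lipschitzOnWith_compact_convex
    {α β : Type*} [NormedAddCommGroup α] [NormedSpace ℝ α] [NormedAddCommGroup β]
    {f : α → β} (hf : LocallyLipschitz f) {s : Set α}
    (hs : IsCompact s) (hconv : Convex ℝ s) :
    ∃ C : ℝ, 0 ≤ C ∧ ∀ x ∈ s, ∀ y ∈ s, ‖f x - f y‖ ≤ C * ‖x - y‖ := by
  rcases s.eq_empty_or_nonempty with rfl | hne
  · exact ⟨0, le_refl 0, by simp⟩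
  -- local Lipschitz data
  have H : ∀ x : α, ∃ K : ℝ≥0, ∃ r : ℝ, 0 < r ∧ LipschitzOnWith K f (ball x r) := by
    intro x
    obtain ⟨K, t, ht, hK⟩ := hf x
    obtain ⟨r, hr, hball⟩ := Metric.mem_nhds_iff.1 ht
    exact ⟨K, r, hr, hK.mono hball⟩
  choose K r hr hK using H
  obtain ⟨F, hFs, hFcover⟩ := hs.elim_nhds_subcover (fun x => ball x (r x / 2))
    (fun x _ => ball_mem_nhds x (by have := hr x; linarith))
  have hFne : F.Nonempty := by
    obtain ⟨z, hz⟩ := hne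
    obtain ⟨x, hx, -⟩ := Set.mem_iUnion₂.1 (hFcover hz)
    exact ⟨x, hx⟩
  set δ : ℝ := F.inf' hFne (fun x => r x / 2) with hδdef
  have hδpos : 0 < δ := by
    rw [hδdef]
    exact (Finset.lt_inf'_iff hFne).2 fun x _ => by have := hr x; linarith
  set C : ℝ := F.sup' hFne (fun x => (K x : ℝ)) with hCdef
  have hCnn : 0 ≤ C := by
    obtain ⟨x, hx⟩ := hFne
    exact le_trans (K x).coe_nonneg (Finset.le_sup' (fun x => (K x : ℝ)) hx)
  -- local step
  have loc : ∀ u ∈ s, ∀ v ∈ s, ‖u - v‖ ≤ δ → ‖f u - f v‖ ≤ C * ‖u - v‖ := by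
    intro u hu v hv huv
    obtain ⟨x, hxF, hux⟩ := Set.mem_iUnion₂.1 (hFcover hu)
    have hδx : δ ≤ r x / 2 := Finset.inf'_le _ hxF
    have hux' : dist u x < r x / 2 := mem_ball.1 hux
    have hvx : dist v x < r x := by
      have : dist v u ≤ δ := by rw [dist_eq_norm, norm_sub_rev]; exact huv
      calc dist v x ≤ dist v u + dist u x := dist_triangle _ _ _
        _ < δ + r x / 2 := by linarith
        _ ≤ r x := by linarith
    have := (hK x).dist_le_mul u (mem_ball.2 (by linarith [hr x] : dist u x < r x)) v
      (mem_ball.2 hvx)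
    rw [dist_eq_norm, dist_eq_norm] at this
    calc ‖f u - f v‖ ≤ (K x : ℝ) * ‖u - v‖ := this
      _ ≤ C * ‖u - v‖ :=
        mul_le_mul_of_nonneg_right (Finset.le_sup' (fun x => (K x : ℝ)) hxF) (norm_nonneg _)
  refine ⟨C, hCnn, ?_⟩
  intro u hu v hv
  rcases eq_or_ne u v with rfl | huv
  · simp
  have hd : 0 < ‖u - v‖ := by
    rw [norm_pos_iff, sub_ne_zero]; exact huv
  set d : ℝ := ‖u - v‖ with hddef
  set m : ℕ := ⌈d / δ⌉₊ with hmdef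
  have hm1 : 1 ≤ m := Nat.one_le_ceil_iff.2 (div_pos hd hδpos)
  have hmpos : (0:ℝ) < m := by exact_mod_cast Nat.lt_of_lt_of_le Nat.zero_lt_one hm1
  have hdm : d / m ≤ δ := by
    rw [div_le_iff₀ hmpos]
    calc d ≤ (d / δ) * δ := by rw [div_mul_cancel₀]; exact hδpos.ne'
      _ ≤ m * δ := mul_le_mul_of_nonneg_right (Nat.le_ceil _) hδpos.le
      _ = δ * m := mul_comm _ _
  set p : ℕ → α := fun i => u + ((i : ℝ) / m) • (v - u) with hpdef
  have hps : ∀ i ≤ m, p i ∈ s := by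
    intro i hi
    apply hconv.add_smul_sub_mem hu hv
    constructor
    · positivity
    · rw [div_le_one hmpos]; exact_mod_cast hi
  have hstep : ∀ i, ‖p i - p (i+1)‖ = d / m := by
    intro i
    have : p i - p (i+1) = (-((1 : ℝ) / m)) • (v - u) := by
      simp only [hpdef, add_sub_add_left_eq_sub, ← sub_smul]
      congr 1
      push_cast
      field_simp
      ring
    rw [this, norm_smul]
    simp only [norm_neg, norm_div, norm_one, Real.norm_natCast]
    rw [norm_sub_rev]
    field_simp
    exact hddef.symm
  have key : ∀ j, j ≤ m → ‖f u - f (p j)‖ ≤ C * (j * (d / m)) := by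
    intro j
    induction j with
    | zero => intro _; simp [hpdef]
    | succ j ih =>
      intro hj
      have hj' : j ≤ m := Nat.le_of_succ_le hj
      have h1 := ih hj'
      have h2 : ‖f (p j) - f (p (j+1))‖ ≤ C * (d / m) := by
        have := loc (p j) (hps j hj') (p (j+1)) (hps (j+1) hj)
          (by rw [hstep j]; exact hdm)
        rwa [hstep j] at this
      calc ‖f u - f (p (j+1))‖ ≤ ‖f u - f (p j)‖ + ‖f (p j) - f (p (j+1))‖ := by
            have := norm_sub_le_norm_sub_add_norm_sub (f u) (f (p j)) (f (p (j+1)))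
            exact this
        _ ≤ C * (j * (d / m)) + C * (d / m) := add_le_add h1 h2
        _ = C * (((j:ℕ)+1 : ℕ) * (d / m)) := by push_cast; ring
  have hpm : p m = v := by
    rw [hpdef]
    simp only []
    rw [div_self hmpos.ne', one_smul]
    abel
  have := key m le_rfl
  rw [hpm] at this
  calc ‖f u - f v‖ ≤ C * (m * (d / m)) := this
    _ = C * d := by field_simp

/-- the averaging lemma. For locally Lipschitz `g : ℝⁿ × ℝ → ℝⁿ`,
`2π`-periodic in its second argument, with average `ḡ(x) = (1/2π) ∫₀^{2π} g(x, φ) dφ`: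
for each compact `D` and `T, ε > 0` there is `ω* > 0` such that for `ω ≥ ω*`, solutions of
`ẋ = g(x, ωt)` and `η̇ = ḡ(η)` with `η(0) = x(0)` and `x(t) ∈ D` on `[0, T]` satisfy
`|η(t) - x(t)| ≤ ε` on `[0, T]`. -/
theorem averaging_closeness (n : ℕ)
    (g : EuclideanSpace ℝ (Fin n) → ℝ → EuclideanSpace ℝ (Fin n))
    (hg : LocallyLipschitz (fun p : EuclideanSpace ℝ (Fin n) × ℝ => g p.1 p.2))
    (hper : ∀ (x : EuclideanSpace ℝ (Fin n)) (φ : ℝ), g x (φ + 2 * π) = g x φ)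
    (D : Set (EuclideanSpace ℝ (Fin n))) (hD : IsCompact D)
    (T ε : ℝ) (hT : 0 < T) (hε : 0 < ε) :
    ∃ ωs : ℝ, 0 < ωs ∧ ∀ ω : ℝ, ωs ≤ ω →
      ∀ x η : ℝ → EuclideanSpace ℝ (Fin n),
        (∀ t ∈ Set.Icc (0:ℝ) T, HasDerivAt x (g (x t) (ω * t)) t) →
        (∀ t ∈ Set.Icc (0:ℝ) T,
          HasDerivAt η ((1 / (2 * π)) • ∫ φ in (0:ℝ)..(2 * π), g (η t) φ) t) →
        η 0 = x 0 → (∀ t ∈ Set.Icc (0:ℝ) T, x t ∈ D) →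
        ∀ t ∈ Set.Icc (0:ℝ) T, ‖η t - x t‖ ≤ ε := by
  classical
  have hπ : (0:ℝ) < π := Real.pi_pos
  have h2π : (0:ℝ) < 2 * π := by positivity
  -- the averaged vector field
  set gbar : EuclideanSpace ℝ (Fin n) → EuclideanSpace ℝ (Fin n) :=
    fun xx => (1 / (2 * π)) • ∫ φ in (0:ℝ)..(2 * π), g xx φ with hgbar_def
  have hgC : Continuous fun p : EuclideanSpace ℝ (Fin n) × ℝ => g p.1 p.2 := hg.continuous
  have hgC2 : ∀ xx, Continuous fun φ => g xx φ := by
    intro xx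
    exact hgC.comp (continuous_const.prodMk continuous_id)
  have hgbarC : Continuous gbar := by
    exact (intervalIntegral.continuous_parametric_intervalIntegral_of_continuous' (μ := volume) hgC 0 (2 * π)).const_smul (1 / (2 * π) : ℝ)
  -- the big compact convex box
  obtain ⟨r, hr⟩ := hD.isBounded.subset_closedBall 0
  set R : ℝ := max r 0 + ε with hR_def
  set K : Set (EuclideanSpace ℝ (Fin n)) := Metric.closedBall 0 R with hK_def
  have hDK : D ⊆ K := by
    intro y hy
    have := hr hy
    rw [Metric.mem_closedBall] at this ⊢
    have : dist y 0 ≤ max r 0 := le_trans this (le_max_left _ _)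
    linarith
  have hKc : IsCompact K := isCompact_closedBall _ _
  have hKconv : Convex ℝ K := convex_closedBall _ _
  set Q : Set (EuclideanSpace ℝ (Fin n) × ℝ) := K ×ˢ (Icc (0:ℝ) (2 * π)) with hQ_def
  have hQc : IsCompact Q := hKc.prod isCompact_Icc
  have hQconv : Convex ℝ Q := hKconv.prod (convex_Icc _ _)
  -- Lipschitz constant on Q
  obtain ⟨L0, hL0, hLip⟩ := locallyLipschitz_lipschitzOnWith_compact_convex hg hQc hQconv
  set L : ℝ := max L0 1 with hL_def
  have hL1 : (1:ℝ) ≤ L := le_max_right _ _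
  have hLpos : (0:ℝ) < L := lt_of_lt_of_le one_pos hL1
  -- bound on Q
  obtain ⟨M0, hM0⟩ := hQc.exists_bound_of_continuousOn hgC.continuousOn
  set M : ℝ := max M0 1 with hM_def
  have hM1 : (1:ℝ) ≤ M := le_max_right _ _
  have hMpos : (0:ℝ) < M := lt_of_lt_of_le one_pos hM1
  -- periodic reduction
  have hred : ∀ φ : ℝ, ∃ ψ, ψ ∈ Icc (0:ℝ) (2 * π) ∧ ∀ xx, g xx φ = g xx ψ := by
    intro φ
    refine ⟨φ - ⌊φ / (2 * π)⌋ * (2 * π),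
      ⟨Int.sub_floor_div_mul_nonneg φ h2π, (Int.sub_floor_div_mul_lt φ h2π).le⟩, ?_⟩
    intro xx
    have hper' : Function.Periodic (g xx) (2 * π) := fun u => hper xx u
    exact (hper'.sub_int_mul_eq ⌊φ / (2 * π)⌋).symm
  -- uniform-in-φ bound and Lipschitz estimates
  have gb : ∀ xx ∈ K, ∀ φ : ℝ, ‖g xx φ‖ ≤ M := by
    intro xx hxx φ
    obtain ⟨ψ, hψ, hgψ⟩ := hred φ
    rw [hgψ xx]
    exact le_trans (hM0 (xx, ψ) ⟨hxx, hψ⟩) (le_max_left _ _)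
  have gl : ∀ (φ : ℝ), ∀ xx ∈ K, ∀ yy ∈ K, ‖g xx φ - g yy φ‖ ≤ L * ‖xx - yy‖ := by
    intro φ xx hxx yy hyy
    obtain ⟨ψ, hψ, hgψ⟩ := hred φ
    rw [hgψ xx, hgψ yy]
    have h1 := hLip (xx, ψ) ⟨hxx, hψ⟩ (yy, ψ) ⟨hyy, hψ⟩
    have h2 : ‖((xx, ψ) : EuclideanSpace ℝ (Fin n) × ℝ) - (yy, ψ)‖ = ‖xx - yy‖ := by
      rw [Prod.mk_sub_mk, Prod.norm_def]
      simp [max_eq_left (norm_nonneg _)]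
    rw [h2] at h1
    calc ‖g xx ψ - g yy ψ‖ ≤ L0 * ‖xx - yy‖ := h1
      _ ≤ L * ‖xx - yy‖ :=
        mul_le_mul_of_nonneg_right (le_max_left _ _) (norm_nonneg _)
  -- estimates for gbar
  have ab : ∀ xx ∈ K, ‖gbar xx‖ ≤ M := by
    intro xx hxx
    rw [hgbar_def]
    simp only [norm_smul, norm_div, norm_one, Real.norm_eq_abs, abs_of_pos h2π]
    have : ‖∫ φ in (0:ℝ)..(2 * π), g xx φ‖ ≤ M * |2 * π - 0| :=
      intervalIntegral.norm_integral_le_of_norm_le_const fun s _ => gb xx hxx s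
    rw [abs_of_pos (by linarith), sub_zero] at this
    calc 1 / (2 * π) * ‖∫ φ in (0:ℝ)..(2 * π), g xx φ‖
        ≤ 1 / (2 * π) * (M * (2 * π)) := by
          apply mul_le_mul_of_nonneg_left this (by positivity)
      _ = M := by field_simp
  have al : ∀ xx ∈ K, ∀ yy ∈ K, ‖gbar xx - gbar yy‖ ≤ L * ‖xx - yy‖ := by
    intro xx hxx yy hyy
    rw [hgbar_def]
    simp only [← smul_sub]
    rw [← intervalIntegral.integral_sub ((hgC2 xx).intervalIntegrable _ _)
      ((hgC2 yy).intervalIntegrable _ _)]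
    rw [norm_smul, norm_div, norm_one, Real.norm_eq_abs, abs_of_pos h2π]
    have : ‖∫ φ in (0:ℝ)..(2 * π), (g xx φ - g yy φ)‖ ≤ (L * ‖xx - yy‖) * |2 * π - 0| :=
      intervalIntegral.norm_integral_le_of_norm_le_const fun s _ => gl s xx hxx yy hyy
    rw [abs_of_pos (by linarith), sub_zero] at this
    calc 1 / (2 * π) * ‖∫ φ in (0:ℝ)..(2 * π), (g xx φ - g yy φ)‖
        ≤ 1 / (2 * π) * ((L * ‖xx - yy‖) * (2 * π)) := by
          apply mul_le_mul_of_nonneg_left this (by positivity)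
      _ = L * ‖xx - yy‖ := by field_simp
  -- choice of ω*
  set A : ℝ := 4 * π * M * (L * T + 1) * Real.exp (L * T) with hA_def
  have hApos : 0 < A := by
    have : 0 < L * T + 1 := by nlinarith
    have := Real.exp_pos (L * T)
    positivity
  refine ⟨max 1 (A * (2 / ε)), lt_of_lt_of_le one_pos (le_max_left _ _), ?_⟩
  intro ω hω x η hx hη h0 hxD
  have hω1 : (1:ℝ) ≤ ω := le_trans (le_max_left _ _) hω
  have hωpos : (0:ℝ) < ω := lt_of_lt_of_le one_pos hω1
  have hωA : A * (2 / ε) ≤ ω := le_trans (le_max_right _ _) hω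
  -- dispatch empty D
  rcases D.eq_empty_or_nonempty with rfl | hDne
  · exact fun t ht => absurd (hxD 0 ⟨le_rfl, hT.le⟩) (Set.notMem_empty _)
  set P : ℝ := 2 * π / ω with hP_def
  have hPpos : 0 < P := by positivity
  set B : ℝ := 2 * M * P * (L * T + 1) with hB_def
  have hBpos : 0 < B := by
    rw [hB_def]
    have h1 : 0 < L * T + 1 := by nlinarith [mul_pos hLpos hT]
    positivity
  -- the final numeric bound
  have hBA : B * Real.exp (L * T) ≤ ε / 2 := by
    have hBA' : B * Real.exp (L * T) = A / ω := by
      rw [hB_def, hA_def, hP_def]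
      ring
    rw [hBA', div_le_iff₀ hωpos]
    calc A = (ε / 2) * (A * (2 / ε)) := by field_simp
      _ ≤ (ε / 2) * ω := by
        apply mul_le_mul_of_nonneg_left hωA (by positivity)
  -- continuity of x on [0, T]
  have hxCA : ∀ t ∈ Icc (0:ℝ) T, ContinuousAt x t := fun t ht => (hx t ht).continuousAt
  have hηCA : ∀ t ∈ Icc (0:ℝ) T, ContinuousAt η t := fun t ht => (hη t ht).continuousAt
  have xK : ∀ t ∈ Icc (0:ℝ) T, x t ∈ K := fun t ht => hDK (hxD t ht)
  -- x is M-Lipschitz on [0, T]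
  have hxLipIcc : ∀ s ∈ Icc (0:ℝ) T, ∀ t ∈ Icc (0:ℝ) T, ‖x t - x s‖ ≤ M * ‖t - s‖ := by
    intro s hs t ht
    exact Convex.norm_image_sub_le_of_norm_hasDerivWithin_le
      (f' := fun u => g (x u) (ω * u))
      (fun u hu => (hx u hu).hasDerivWithinAt)
      (fun u hu => gb (x u) (xK u hu) (ω * u)) (convex_Icc _ _) hs ht
  -- the clamped solution
  set proj : ℝ → ℝ := fun s => max 0 (min s T) with hproj_def
  have proj_mem : ∀ s, proj s ∈ Icc (0:ℝ) T := by
    intro s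
    exact ⟨le_max_left _ _, max_le hT.le (min_le_right _ _)⟩
  have proj_eq : ∀ s ∈ Icc (0:ℝ) T, proj s = s := by
    intro s hs
    rw [hproj_def]
    simp only [min_eq_left hs.2, max_eq_right hs.1]
  have projC : Continuous proj := continuous_const.max (continuous_id.min continuous_const)
  have proj_lip : ∀ s t : ℝ, |proj t - proj s| ≤ |t - s| := by
    intro s t
    rw [hproj_def]
    simp only [max_comm (0:ℝ)]
    calc |max (min t T) 0 - max (min s T) 0| ≤ |min t T - min s T| :=
        abs_max_sub_max_le_abs _ _ _
      _ ≤ max |t - s| |T - T| := abs_min_sub_min_le_max _ _ _ _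
      _ = |t - s| := by simp
  set xc : ℝ → EuclideanSpace ℝ (Fin n) := fun s => x (proj s) with hxc_def
  have xcC : Continuous xc :=
    continuous_iff_continuousAt.2 fun s => (hxCA _ (proj_mem s)).comp projC.continuousAt
  have xcD : ∀ s, xc s ∈ D := fun s => hxD _ (proj_mem s)
  have xcK : ∀ s, xc s ∈ K := fun s => hDK (xcD s)
  have xc_eq : ∀ s ∈ Icc (0:ℝ) T, xc s = x s := fun s hs => by
    show x (proj s) = x s
    rw [proj_eq s hs]
  have xcLip : ∀ s t : ℝ, ‖xc t - xc s‖ ≤ M * |t - s| := by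
    intro s t
    calc ‖xc t - xc s‖ ≤ M * ‖proj t - proj s‖ :=
        hxLipIcc (proj s) (proj_mem s) (proj t) (proj_mem t)
      _ ≤ M * |t - s| := by
        rw [Real.norm_eq_abs]
        exact mul_le_mul_of_nonneg_left (proj_lip s t) hMpos.le
  -- the oscillating integrand and its primitive
  set hc : ℝ → EuclideanSpace ℝ (Fin n) := fun s => gbar (xc s) - g (xc s) (ω * s) with hhc_def
  have hcC : Continuous hc := by
    apply Continuous.sub (hgbarC.comp xcC)
    exact hgC.comp (xcC.prodMk (continuous_const.mul continuous_id))
  set Ic : ℝ → EuclideanSpace ℝ (Fin n) := fun t => ∫ s in (0:ℝ)..t, hc s with hIc_def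
  have hcB : ∀ s : ℝ, ‖hc s‖ ≤ 2 * M := by
    intro s
    calc ‖hc s‖ ≤ ‖gbar (xc s)‖ + ‖g (xc s) (ω * s)‖ := norm_sub_le _ _
      _ ≤ M + M := add_le_add (ab _ (xcK s)) (gb _ (xcK s) _)
      _ = 2 * M := by ring
  -- the one-period estimate
  have period_est : ∀ a : ℝ, ‖∫ s in a..(a + P), hc s‖ ≤ 2 * L * M * P ^ 2 := by
    intro a
    have int1 : IntervalIntegrable (fun s => gbar (xc s) - gbar (xc a)) volume a (a + P) :=
      (Continuous.sub (hgbarC.comp xcC) continuous_const).intervalIntegrable _ _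
    have int2 : IntervalIntegrable (fun s => g (xc a) (ω * s) - g (xc s) (ω * s))
        volume a (a + P) := by
      apply Continuous.intervalIntegrable
      exact ((hgC2 (xc a)).comp (continuous_const.mul continuous_id)).sub
        (hgC.comp (xcC.prodMk (continuous_const.mul continuous_id)))
    have int3 : IntervalIntegrable (fun s => gbar (xc a) - g (xc a) (ω * s)) volume a (a + P) := by
      apply Continuous.intervalIntegrable
      exact continuous_const.sub ((hgC2 (xc a)).comp (continuous_const.mul continuous_id))
    have hsplit : ∫ s in a..(a + P), hc s =
        (∫ s in a..(a + P), (gbar (xc s) - gbar (xc a))) +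
        ((∫ s in a..(a + P), (g (xc a) (ω * s) - g (xc s) (ω * s))) +
         (∫ s in a..(a + P), (gbar (xc a) - g (xc a) (ω * s)))) := by
      rw [← intervalIntegral.integral_add int2 int3, ← intervalIntegral.integral_add int1
        (int2.add int3)]
      apply intervalIntegral.integral_congr
      intro s _
      rw [hhc_def]
      abel
    -- the third integral vanishes
    have hzero : (∫ s in a..(a + P), (gbar (xc a) - g (xc a) (ω * s))) = 0 := by
      rw [intervalIntegral.integral_sub (by apply Continuous.intervalIntegrable; fun_prop)
        (by apply Continuous.intervalIntegrable
            exact (hgC2 (xc a)).comp (continuous_const.mul continuous_id))]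
      rw [intervalIntegral.integral_const]
      have hcomp : (∫ s in a..(a + P), g (xc a) (ω * s)) =
          ω⁻¹ • ∫ u in (ω * a)..(ω * (a + P)), g (xc a) u :=
        intervalIntegral.integral_comp_mul_left (fun u => g (xc a) u) hωpos.ne'
      have hωP : ω * (a + P) = ω * a + 2 * π := by
        rw [hP_def, mul_add]
        congr 1
        field_simp
      have hper' : Function.Periodic (g (xc a)) (2 * π) := fun u => hper (xc a) u
      have hshift : (∫ u in (ω * a)..(ω * a + 2 * π), g (xc a) u) =
          ∫ u in (0:ℝ)..(2 * π), g (xc a) u := by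
        have := hper'.intervalIntegral_add_eq (ω * a) 0
        simpa using this
      rw [hcomp, hωP, hshift]
      have : (∫ u in (0:ℝ)..(2 * π), g (xc a) u) = (2 * π) • gbar (xc a) := by
        rw [hgbar_def]
        simp only [smul_smul]
        rw [mul_one_div, div_self (by positivity : (2:ℝ) * π ≠ 0), one_smul]
      rw [this, smul_smul, add_sub_cancel_left, sub_eq_zero, hP_def]
      congr 1
      field_simp
    rw [hsplit, hzero, add_zero]
    have key : ∀ s ∈ Set.uIoc a (a + P), ‖xc s - xc a‖ ≤ M * P := by
      intro s hs
      rw [Set.uIoc_of_le (by linarith : a ≤ a + P)] at hs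
      calc ‖xc s - xc a‖ ≤ M * |s - a| := xcLip a s
        _ ≤ M * P := by
          apply mul_le_mul_of_nonneg_left _ hMpos.le
          rw [abs_of_nonneg (by linarith [hs.1] : (0:ℝ) ≤ s - a)]
          linarith [hs.2]
    have e1 : ‖∫ s in a..(a + P), (gbar (xc s) - gbar (xc a))‖ ≤ (L * (M * P)) * |a + P - a| := by
      apply intervalIntegral.norm_integral_le_of_norm_le_const
      intro s hs
      calc ‖gbar (xc s) - gbar (xc a)‖ ≤ L * ‖xc s - xc a‖ := al _ (xcK s) _ (xcK a)
        _ ≤ L * (M * P) := mul_le_mul_of_nonneg_left (key s hs) hLpos.le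
    have e2 : ‖∫ s in a..(a + P), (g (xc a) (ω * s) - g (xc s) (ω * s))‖
        ≤ (L * (M * P)) * |a + P - a| := by
      apply intervalIntegral.norm_integral_le_of_norm_le_const
      intro s hs
      calc ‖g (xc a) (ω * s) - g (xc s) (ω * s)‖ ≤ L * ‖xc a - xc s‖ :=
          gl _ _ (xcK a) _ (xcK s)
        _ ≤ L * (M * P) := by
          rw [norm_sub_rev]
          exact mul_le_mul_of_nonneg_left (key s hs) hLpos.le
    have habs : |a + P - a| = P := by rw [add_sub_cancel_left, abs_of_pos hPpos]
    rw [habs] at e1 e2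
    calc ‖(∫ s in a..(a + P), (gbar (xc s) - gbar (xc a))) +
          (∫ s in a..(a + P), (g (xc a) (ω * s) - g (xc s) (ω * s)))‖
        ≤ (L * (M * P)) * P + (L * (M * P)) * P := le_trans (norm_add_le _ _) (add_le_add e1 e2)
      _ = 2 * L * M * P ^ 2 := by ring
  -- inductive estimate on Ic
  have Ic_bound : ∀ k : ℕ, ∀ t : ℝ, 0 ≤ t → t ≤ (k + 1) * P →
      ‖Ic t‖ ≤ 2 * L * M * P * t + 2 * M * P := by
    intro k
    induction k with
    | zero =>
      intro t ht0 htP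
      have : ‖Ic t‖ ≤ 2 * M * |t - 0| :=
        intervalIntegral.norm_integral_le_of_norm_le_const fun s _ => hcB s
      rw [sub_zero, abs_of_nonneg ht0] at this
      have h1 : 2 * M * t ≤ 2 * M * P := by
        apply mul_le_mul_of_nonneg_left _ (by positivity)
        push_cast at htP
        linarith
      have h2 : 0 ≤ 2 * L * M * P * t :=
        mul_nonneg (by positivity) ht0
      linarith
    | succ k ih =>
      intro t ht0 htP
      rcases le_or_gt t ((k + 1) * P) with h | h
      · exact ih t ht0 h
      have htP' : P ≤ t := by
        have : (1:ℝ) * P ≤ (k + 1) * P := by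
          apply mul_le_mul_of_nonneg_right _ hPpos.le
          push_cast; linarith [Nat.cast_nonneg (α := ℝ) k]
        linarith
      have hsplit : Ic t = Ic (t - P) + ∫ s in (t - P)..t, hc s := by
        rw [hIc_def]
        exact (intervalIntegral.integral_add_adjacent_intervals
          (hcC.intervalIntegrable _ _) (hcC.intervalIntegrable _ _)).symm
      have hprev : ‖Ic (t - P)‖ ≤ 2 * L * M * P * (t - P) + 2 * M * P := by
        apply ih (t - P) (by linarith)
        push_cast at htP ⊢
        linarith
      have hper_est : ‖∫ s in (t - P)..t, hc s‖ ≤ 2 * L * M * P ^ 2 := by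
        have := period_est (t - P)
        rwa [sub_add_cancel] at this
      calc ‖Ic t‖ ≤ ‖Ic (t - P)‖ + ‖∫ s in (t - P)..t, hc s‖ := by
            rw [hsplit]; exact norm_add_le _ _
        _ ≤ (2 * L * M * P * (t - P) + 2 * M * P) + 2 * L * M * P ^ 2 :=
            add_le_add hprev hper_est
        _ = 2 * L * M * P * t + 2 * M * P := by ring
  have IcB : ∀ t ∈ Icc (0:ℝ) T, ‖Ic t‖ ≤ B := by
    intro t ht
    have hk : t ≤ (⌊t / P⌋₊ + 1) * P := by
      have := Nat.lt_floor_add_one (t / P)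
      have h1 : t / P < (⌊t / P⌋₊ + 1 : ℝ) := by push_cast at this ⊢; linarith
      calc t = t / P * P := by field_simp
        _ ≤ (⌊t / P⌋₊ + 1 : ℝ) * P := mul_le_mul_of_nonneg_right h1.le hPpos.le
    have := Ic_bound ⌊t / P⌋₊ t ht.1 hk
    calc ‖Ic t‖ ≤ 2 * L * M * P * t + 2 * M * P := this
      _ ≤ 2 * L * M * P * T + 2 * M * P := by
          have := mul_le_mul_of_nonneg_left ht.2 (by positivity : (0:ℝ) ≤ 2 * L * M * P)
          linarith
      _ = B := by rw [hB_def]; ring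
  -- derivative of Ic
  have hIc' : ∀ t : ℝ, HasDerivAt Ic (hc t) t := by
    intro t
    apply intervalIntegral.integral_hasDerivAt_right (hcC.intervalIntegrable _ _)
      (hcC.stronglyMeasurableAtFilter volume (𝓝 t)) hcC.continuousAt
  have Ic0 : Ic 0 = 0 := intervalIntegral.integral_same
  -- the key Gronwall estimate
  have main : ∀ τ ∈ Icc (0:ℝ) T, (∀ s ∈ Icc (0:ℝ) τ, ‖η s - x s‖ ≤ ε) →
      ∀ s ∈ Icc (0:ℝ) τ, ‖η s - x s‖ ≤ ε / 2 := by
    intro τ hτ hclose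
    have hsub : Icc (0:ℝ) τ ⊆ Icc (0:ℝ) T := Icc_subset_Icc le_rfl hτ.2
    have ηK : ∀ s ∈ Icc (0:ℝ) τ, η s ∈ K := by
      intro s hs
      have h1 : ‖x s‖ ≤ max r 0 := by
        have := hr (hxD s (hsub hs))
        rw [Metric.mem_closedBall, dist_zero_right] at this
        exact le_trans this (le_max_left _ _)
      have h2 : ‖η s‖ ≤ ‖η s - x s‖ + ‖x s‖ := by
        have := norm_add_le (η s - x s) (x s)
        simpa using this
      rw [hK_def, Metric.mem_closedBall, dist_zero_right, hR_def]
      have := hclose s hs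
      linarith
    set z : ℝ → EuclideanSpace ℝ (Fin n) := fun t => η t - x t - Ic t with hz_def
    have hz0 : z 0 = 0 := by rw [hz_def]; simp [h0, Ic0]
    have hz' : ∀ t ∈ Icc (0:ℝ) τ, HasDerivAt z (gbar (η t) - gbar (x t)) t := by
      intro t ht
      have h1 := ((hη t (hsub ht)).sub (hx t (hsub ht))).sub (hIc' t)
      have h2 : hc t = gbar (x t) - g (x t) (ω * t) := by
        rw [hhc_def]; simp only [xc_eq t (hsub ht)]
      have h3 : (1 / (2 * π)) • (∫ φ in (0:ℝ)..(2 * π), g (η t) φ) = gbar (η t) := rfl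
      rw [h2, h3] at h1
      convert h1 using 1
      all_goals first | rfl | abel
    have hzC : ContinuousOn z (Icc (0:ℝ) τ) :=
      fun t ht => ((hz' t ht).continuousAt).continuousWithinAt
    have bound : ∀ t ∈ Ico (0:ℝ) τ, ‖gbar (η t) - gbar (x t)‖ ≤ L * ‖z t‖ + L * B := by
      intro t ht
      have ht' : t ∈ Icc (0:ℝ) τ := Ico_subset_Icc_self ht
      have h1 : ‖gbar (η t) - gbar (x t)‖ ≤ L * ‖η t - x t‖ :=
        al _ (ηK t ht') _ (xK t (hsub ht'))
      have h2 : ‖η t - x t‖ ≤ ‖z t‖ + ‖Ic t‖ := by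
        rw [hz_def]
        calc ‖η t - x t‖ = ‖(η t - x t - Ic t) + Ic t‖ := by rw [sub_add_cancel]
          _ ≤ ‖η t - x t - Ic t‖ + ‖Ic t‖ := norm_add_le _ _
      have h3 : ‖Ic t‖ ≤ B := IcB t (hsub ht')
      calc ‖gbar (η t) - gbar (x t)‖ ≤ L * ‖η t - x t‖ := h1
        _ ≤ L * (‖z t‖ + B) := by
          apply mul_le_mul_of_nonneg_left _ hLpos.le
          linarith
        _ = L * ‖z t‖ + L * B := by ring
    have gron := norm_le_gronwallBound_of_norm_deriv_right_le (f := z)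
      (f' := fun t => gbar (η t) - gbar (x t)) (δ := 0) (K := L) (ε := L * B)
      (a := 0) (b := τ) hzC
      (fun t ht => (hz' t (Ico_subset_Icc_self ht)).hasDerivWithinAt)
      (by rw [hz0]; simp) bound
    intro s hs
    have hgr : gronwallBound 0 L (L * B) (s - 0) = B * (Real.exp (L * s) - 1) := by
      simp only [gronwallBound_of_K_ne_0 hLpos.ne', sub_zero, zero_mul, zero_add]
      rw [mul_comm L B, mul_div_assoc, div_self hLpos.ne', mul_one]
    have hzs' : ‖z s‖ ≤ B * (Real.exp (L * s) - 1) := by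
      rw [← hgr]; exact gron s hs
    have hexp : Real.exp (L * s) ≤ Real.exp (L * T) := by
      apply Real.exp_le_exp.2
      apply mul_le_mul_of_nonneg_left _ hLpos.le
      linarith [hs.2, hτ.2]
    have h4 : ‖η s - x s‖ ≤ ‖z s‖ + ‖Ic s‖ := by
      rw [hz_def]
      calc ‖η s - x s‖ = ‖(η s - x s - Ic s) + Ic s‖ := by rw [sub_add_cancel]
        _ ≤ ‖η s - x s - Ic s‖ + ‖Ic s‖ := norm_add_le _ _
    have h5 : ‖Ic s‖ ≤ B := IcB s (hsub hs)
    calc ‖η s - x s‖ ≤ ‖z s‖ + ‖Ic s‖ := h4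
      _ ≤ B * (Real.exp (L * s) - 1) + B := add_le_add hzs' h5
      _ = B * Real.exp (L * s) := by ring
      _ ≤ B * Real.exp (L * T) := by
        apply mul_le_mul_of_nonneg_left hexp hBpos.le
      _ ≤ ε / 2 := hBA
  -- bootstrap
  set S : Set ℝ := {t | t ∈ Icc (0:ℝ) T ∧ ∀ s ∈ Icc (0:ℝ) t, ‖η s - x s‖ ≤ ε} with hS_def
  have hS0 : (0:ℝ) ∈ S := by
    refine ⟨⟨le_rfl, hT.le⟩, ?_⟩
    intro s hs
    have : s = 0 := le_antisymm hs.2 hs.1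
    rw [this, h0]
    simp [hε.le]
  have hSbdd : BddAbove S := ⟨T, fun t ht => ht.1.2⟩
  set τ : ℝ := sSup S with hτ_def
  have hτmem : τ ∈ Icc (0:ℝ) T :=
    ⟨le_csSup hSbdd hS0, csSup_le ⟨0, hS0⟩ fun t ht => ht.1.2⟩
  have hbefore : ∀ s, 0 ≤ s → s < τ → ‖η s - x s‖ ≤ ε := by
    intro s hs0 hsτ
    obtain ⟨a, haS, hsa⟩ := exists_lt_of_lt_csSup ⟨0, hS0⟩ hsτ
    exact haS.2 s ⟨hs0, hsa.le⟩
  have hτS : ∀ s ∈ Icc (0:ℝ) τ, ‖η s - x s‖ ≤ ε := by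
    intro s hs
    rcases lt_or_eq_of_le hs.2 with h | h
    · exact hbefore s hs.1 h
    rcases eq_or_lt_of_le hs.1 with h0' | h0'
    · rw [← h0', h0]; simp [hε.le]
    -- s = τ > 0 : use continuity from the left
    have hcont : ContinuousAt (fun u => ‖η u - x u‖) s :=
      (((hη s (Icc_subset_Icc le_rfl hτmem.2 hs)).continuousAt).sub
        ((hx s (Icc_subset_Icc le_rfl hτmem.2 hs)).continuousAt)).norm
    have htend : Tendsto (fun u => ‖η u - x u‖) (𝓝[<] s) (𝓝 (‖η s - x s‖)) :=
      hcont.tendsto.mono_left nhdsWithin_le_nhds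
    apply le_of_tendsto htend
    filter_upwards [Ioo_mem_nhdsLT h0']
    intro u hu
    exact hbefore u hu.1.le (lt_of_lt_of_le hu.2 h.le)
  have hτT : τ = T := by
    by_contra hne
    have hτlt : τ < T := lt_of_le_of_ne hτmem.2 hne
    have hhalf := main τ hτmem hτS
    have hττ : ‖η τ - x τ‖ ≤ ε / 2 := hhalf τ ⟨hτmem.1, le_rfl⟩
    have hcont : ContinuousAt (fun u => ‖η u - x u‖) τ :=
      (((hη τ hτmem).continuousAt).sub ((hx τ hτmem).continuousAt)).norm
    have hev : ∀ᶠ u in 𝓝 τ, ‖η u - x u‖ < ε := by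
      have hIio : Set.Iio ε ∈ 𝓝 (‖η τ - x τ‖) := Iio_mem_nhds (by linarith)
      exact hcont hIio
    obtain ⟨δ, hδpos, hδ⟩ := Metric.eventually_nhds_iff.1 hev
    set t' : ℝ := min T (τ + δ / 2) with ht'_def
    have ht'τ : τ < t' := lt_min hτlt (by linarith)
    have ht'S : t' ∈ S := by
      refine ⟨⟨le_trans hτmem.1 ht'τ.le, min_le_left _ _⟩, ?_⟩
      intro s hs
      rcases le_or_gt s τ with h | h
      · exact le_trans (hhalf s ⟨hs.1, h⟩) (by linarith)
      · have hsd : dist s τ < δ := by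
          rw [Real.dist_eq, abs_of_pos (by linarith : (0:ℝ) < s - τ)]
          have : s ≤ τ + δ / 2 := le_trans hs.2 (min_le_right _ _)
          linarith
        exact (hδ hsd).le
    have := le_csSup hSbdd ht'S
    linarith
  intro t ht
  apply hτS
  rw [hτT]
  exact ht
end
end
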